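/- arXiv:1101.0559 — 5 statements merged into one kernel-verified Lean document; each statement's English description precedes it below -/
import Mathlib

section
/- Let M ≥ 3 and let (X_n) be the unzipping walk with transition probabilities p_1 = 1 and p_x ∈ (0,1) for 2 ≤ x ≤ M−1. For any vector of positive integers k = (k_1,…,k_{M−1}) with k_{M−1} = 1, the joint distribution of the up-crossing counts is P(L⁺_x = k_x for all 1 ≤ x ≤ M−1) = ∏_{x=2}^{M−1} C(k_x + k_{x−1} − 2, k_x − 1) · p_x^{k_x} · (1−p_x)^{k_{x−1}−1}, where C(n,j) denotes the binomial coefficient. -/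
open scoped BigOperators Topology Classical
open Real MeasureTheory Filter

/-- One-step transition probability of the unzipping walk: from `x` to `x+1` with
probability `p x`, from `x` to `x-1` with probability `1 - p x`. -/
def stepProb (p : ℕ → ℝ) (x y : ℕ) : ℝ :=
  if y = x + 1 then p x else if y + 1 = x then 1 - p x else 0

/-- Probability of a finite trajectory (list of successive states). -/
def pathProb (p : ℕ → ℝ) : List ℕ → ℝ
  | x :: y :: l => stepProb p x y * pathProb p (y :: l)
  | _ => 1

/-- `upCount x l` = number of jumps from `x` to `x+1` along the trajectory `l`. -/
def upCount (x : ℕ) : List ℕ → ℕ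
  | a :: b :: l => (if a = x ∧ b = x + 1 then 1 else 0) + upCount x (b :: l)
  | _ => 0

/-- `downCount x l` = number of jumps from `x` to `x-1` along the trajectory `l`. -/
def downCount (x : ℕ) : List ℕ → ℕ
  | a :: b :: l => (if a = x ∧ b + 1 = x then 1 else 0) + downCount x (b :: l)
  | _ => 0

/-- A killed trajectory of the unzipping walk: a nearest-neighbour path on `{1,…,M}`
starting at `1`, ending at `M`, whose states before the final one lie in `[1, M)`. -/
def IsPath (M : ℕ) (l : List ℕ) : Prop :=
  l.head? = some 1 ∧ l.getLast? = some M ∧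
  (∀ i, i + 1 < l.length → l.getD (i + 1) 0 = l.getD i 0 + 1 ∨ l.getD (i + 1) 0 + 1 = l.getD i 0) ∧
  (∀ i, i + 1 < l.length → 1 ≤ l.getD i 0 ∧ l.getD i 0 < M)

/-- A trajectory realizing the event "started from `x+1`, the walk hits `M` before `x`":
a nearest-neighbour path starting at `x+1`, ending at `M`, avoiding `x` (and `M`)
before its final state. -/
def IsEscapePath (M x : ℕ) (l : List ℕ) : Prop :=
  l.head? = some (x + 1) ∧ l.getLast? = some M ∧
  (∀ i, i + 1 < l.length → l.getD (i + 1) 0 = l.getD i 0 + 1 ∨ l.getD (i + 1) 0 + 1 = l.getD i 0) ∧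
  (∀ i, i + 1 < l.length → l.getD i 0 ≠ x ∧ l.getD i 0 ≠ M)

/-- `pbar M p x` = probability that the walk started from `x+1` hits `M` before `x`. -/
noncomputable def pbar (M : ℕ) (p : ℕ → ℝ) (x : ℕ) : ℝ :=
  ∑' l : {l : List ℕ // IsEscapePath M x l}, pathProb p l.1

/-- `word x l` : sequence of up/down decisions taken at visits of `x`. -/
def word (x : ℕ) : List ℕ → List Bool
  | a :: b :: l => (if a = x then [decide (b = x + 1)] else []) ++ word x (b :: l)
  | _ => []

inductive Walk (M : ℕ) : ℕ → List ℕ → Prop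
  | nil : Walk M M [M]
  | up {a l} : 1 ≤ a → a < M → Walk M (a + 1) l → Walk M a (a :: l)
  | down {a l} : 1 ≤ a → a + 1 < M → Walk M a l → Walk M (a + 1) ((a + 1) :: l)

theorem Walk.head {M a l} (h : Walk M a l) : l.head? = some a := by
  cases h <;> rfl

theorem Walk.ne_nil {M a l} (h : Walk M a l) : l ≠ [] := by
  cases h <;> simp

theorem Walk.cons {M a l} (h : Walk M a l) : ∃ r, l = a :: r := by
  cases h <;> exact ⟨_, rfl⟩

theorem Walk.last {M a l} (h : Walk M a l) : l.getLast? = some M := by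
  induction h with
  | nil => rfl
  | up h1 h2 h3 ih => rw [← ih]; obtain ⟨r, rfl⟩ := h3.cons; rfl
  | down h1 h2 h3 ih => rw [← ih]; obtain ⟨r, rfl⟩ := h3.cons; rfl

theorem Walk.steps {M a l} (h : Walk M a l) :
    ∀ i, i + 1 < l.length → l.getD (i + 1) 0 = l.getD i 0 + 1 ∨ l.getD (i + 1) 0 + 1 = l.getD i 0 := by
  induction h with
  | nil => intro i hi; simp at hi
  | @up a l h1 h2 h3 ih =>
    obtain ⟨r, rfl⟩ := h3.cons
    rintro (_ | i) hi
    · simp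
    · simpa using ih i (by simpa using hi)
  | @down a l h1 h2 h3 ih =>
    obtain ⟨r, rfl⟩ := h3.cons
    rintro (_ | i) hi
    · simp
    · simpa using ih i (by simpa using hi)

theorem Walk.bounds {M a l} (h : Walk M a l) :
    ∀ i, i + 1 < l.length → 1 ≤ l.getD i 0 ∧ l.getD i 0 < M := by
  induction h with
  | nil => intro i hi; simp at hi
  | @up a l h1 h2 h3 ih =>
    rintro (_ | i) hi
    · simpa using ⟨h1, h2⟩
    · simpa using ih i (by simpa using hi)
  | @down a l h1 h2 h3 ih =>
    rintro (_ | i) hi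
    · simp; omega
    · simpa using ih i (by simpa using hi)

theorem walk_iff_isPath {M l} : IsPath M l ↔ Walk M 1 l := by
  constructor
  · rintro ⟨h1, h2, h3, h4⟩
    suffices H : ∀ n (l : List ℕ) a, l.length ≤ n → l.head? = some a → l.getLast? = some M →
        (∀ i, i + 1 < l.length → l.getD (i + 1) 0 = l.getD i 0 + 1 ∨ l.getD (i + 1) 0 + 1 = l.getD i 0) →
        (∀ i, i + 1 < l.length → 1 ≤ l.getD i 0 ∧ l.getD i 0 < M) → Walk M a l by
      exact H l.length l 1 le_rfl h1 h2 h3 h4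
    clear h1 h2 h3 h4 l
    intro n
    induction n with
    | zero => intro l a hl h1; interval_cases hh : l.length <;> simp_all
    | succ n ih =>
      rintro (_ | ⟨b, _ | ⟨c, r⟩⟩) a hl h1 h2 h3 h4
      · simp at h1
      · simp at h1 h2; subst h1 h2; exact Walk.nil
      · simp only [List.head?_cons, Option.some.injEq] at h1; cases h1
        have hb : 1 ≤ b ∧ b < M := by simpa using h4 0 (by simp)
        have hw : Walk M c (c :: r) := by
          apply ih _ c (by simp only [List.length_cons] at hl ⊢; omega)
          · rfl
          · simpa using h2
          · intro i hi; simpa using h3 (i + 1) (by simpa using hi)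
          · intro i hi; simpa using h4 (i + 1) (by simpa using hi)
        have hstep := h3 0 (by simp)
        simp only [List.getD_cons_succ, List.getD_cons_zero] at hstep
        rcases hstep with h | h
        · rw [show c = b + 1 from by simpa using h] at hw ⊢
          exact Walk.up hb.1 hb.2 hw
        · have hc1 : 1 ≤ c := by
            rcases r with _ | ⟨d, r⟩
            · simp at h2; omega
            · exact (h4 1 (by simp)).1
          have := Walk.down (a := c) hc1 (by omega) hw
          rwa [show c + 1 = b from h] at this
  · intro h
    exact ⟨h.head, h.last, h.steps, h.bounds⟩

theorem Walk.count_word_true {M a l} (h : Walk M a l) (x : ℕ) :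
    (word x l).count true = upCount x l := by
  induction h with
  | nil => rfl
  | @up a l h1 h2 h3 ih =>
    obtain ⟨r, rfl⟩ := h3.cons
    rcases eq_or_ne a x with rfl | hne
    · simp [word, upCount, ih, List.count_cons] <;> (try split_ifs) <;> omega
    · simp [word, upCount, ih, hne, List.count_cons] <;> (try split_ifs) <;> omega
  | @down a l h1 h2 h3 ih =>
    obtain ⟨r, rfl⟩ := h3.cons
    rcases eq_or_ne (a + 1) x with rfl | hne
    · simp [word, upCount, ih, List.count_cons] <;> (try split_ifs) <;> omega
    · simp [word, upCount, ih, hne, List.count_cons] <;> (try split_ifs) <;> omega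

theorem Walk.count_word_false {M a l} (h : Walk M a l) (x : ℕ) :
    (word x l).count false = downCount x l := by
  induction h with
  | nil => rfl
  | @up a l h1 h2 h3 ih =>
    obtain ⟨r, rfl⟩ := h3.cons
    rcases eq_or_ne a x with rfl | hne
    · simp [word, downCount, ih, List.count_cons] <;> (try split_ifs) <;> omega
    · simp [word, downCount, ih, hne, List.count_cons] <;> (try split_ifs) <;> omega
  | @down a l h1 h2 h3 ih =>
    obtain ⟨r, rfl⟩ := h3.cons
    rcases eq_or_ne (a + 1) x with rfl | hne
    · simp [word, downCount, ih, List.count_cons] <;> (try split_ifs) <;> omega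
    · simp [word, downCount, ih, hne, List.count_cons] <;> (try split_ifs) <;> omega

theorem Walk.cross {M a l} (h : Walk M a l) (x : ℕ) (hx : x < M) :
    upCount x l = downCount (x + 1) l + (if a ≤ x then 1 else 0) := by
  induction h with
  | nil => simp [upCount, downCount, if_neg (show ¬ M ≤ x by omega)]
  | @up a l h1 h2 h3 ih =>
    obtain ⟨r, rfl⟩ := h3.cons
    simp only [upCount, downCount, ih]
    split_ifs <;> omega
  | @down a l h1 h2 h3 ih =>
    obtain ⟨r, rfl⟩ := h3.cons
    simp only [upCount, downCount, ih]
    split_ifs <;> omega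

theorem Walk.word_empty {M a l} (h : Walk M a l) (x : ℕ) (hx : x = 0 ∨ M ≤ x) :
    word x l = [] := by
  induction h with
  | nil => rfl
  | @up a l h1 h2 h3 ih =>
    obtain ⟨r, rfl⟩ := h3.cons
    have : a ≠ x := by omega
    simp [word, ih, this]
  | @down a l h1 h2 h3 ih =>
    obtain ⟨r, rfl⟩ := h3.cons
    have : a + 1 ≠ x := by omega
    simp [word, ih, this]

theorem Walk.word_last {M a l} (h : Walk M a l) (x : ℕ) (hx : x < M) :
    word x l ≠ [] → (word x l).getLast? = some true := by
  induction h with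
  | nil => intro hne; simp [word] at hne
  | @up a l h1 h2 h3 ih =>
    obtain ⟨r, rfl⟩ := h3.cons
    intro hne
    rcases eq_or_ne a x with rfl | hax
    · rcases eq_or_ne (word a ((a + 1) :: r)) [] with he | he
      · simp [word, he]
      · have := ih he
        simp only [word, if_pos rfl]
        obtain ⟨d, w', hw⟩ := List.exists_cons_of_ne_nil he
        rw [hw] at this
        simp [word, hw, List.getLast?_cons_cons, this]
    · have : word x (a :: (a + 1) :: r) = word x ((a + 1) :: r) := by simp [word, hax]
      rw [this] at hne ⊢
      exact ih hne
  | @down a l h1 h2 h3 ih =>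
    obtain ⟨r, rfl⟩ := h3.cons
    intro hne
    rcases eq_or_ne (a + 1) x with rfl | hax
    · have hup : 1 ≤ upCount (a + 1) (a :: r) := by
        rw [h3.cross (a + 1) hx]
        split_ifs <;> omega
      have he : word (a + 1) (a :: r) ≠ [] := by
        intro h0
        rw [← h3.count_word_true (a + 1), h0] at hup
        simp at hup
      have := ih he
      simp only [word, if_pos rfl]
      obtain ⟨d, w', hw⟩ := List.exists_cons_of_ne_nil he
      rw [hw] at this
      simp [word, hw, List.getLast?_cons_cons, this]
    · have : word x ((a + 1) :: a :: r) = word x (a :: r) := by simp [word, hax]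
      rw [this] at hne ⊢
      exact ih hne

private lemma prod_factor {f g : ℕ → ℝ} {M a : ℕ} (ha : a < M) (c : ℝ)
    (hga : g a = c * f a) (hg : ∀ x < M, x ≠ a → g x = f x) :
    ∏ x ∈ Finset.range M, g x = c * ∏ x ∈ Finset.range M, f x := by
  have haM : a ∈ Finset.range M := Finset.mem_range.mpr ha
  rw [← Finset.mul_prod_erase _ g haM, ← Finset.mul_prod_erase _ f haM, hga, mul_assoc]
  congr 1
  congr 1
  exact Finset.prod_congr rfl fun x hx =>
    hg x (Finset.mem_range.mp (Finset.mem_of_mem_erase hx)) (Finset.ne_of_mem_erase hx)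

theorem Walk.prob {M a l} (h : Walk M a l) (p : ℕ → ℝ) :
    pathProb p l = ∏ x ∈ Finset.range M, (p x ^ upCount x l * (1 - p x) ^ downCount x l) := by
  induction h with
  | nil => simp [pathProb, upCount, downCount]
  | @up a l h1 h2 h3 ih =>
    obtain ⟨r, rfl⟩ := h3.cons
    have hstep : pathProb p (a :: (a + 1) :: r) = p a * pathProb p ((a + 1) :: r) := by
      simp [pathProb, stepProb]
    rw [hstep, ih]
    symm
    apply prod_factor h2
    · simp [upCount, downCount, pow_succ]
      ring_nf
      rw [if_neg (by omega)]
      ring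
    · intro x hx hxa
      have h1 : ¬(a = x ∧ a + 1 = x + 1) := by omega
      have h2 : ¬(a = x ∧ a + 1 + 1 = x) := by omega
      simp [upCount, downCount, if_neg h1, if_neg h2, Ne.symm hxa]
  | @down a l h1 h2 h3 ih =>
    obtain ⟨r, rfl⟩ := h3.cons
    have hstep : pathProb p ((a + 1) :: a :: r) = (1 - p (a + 1)) * pathProb p (a :: r) := by
      simp [pathProb, stepProb, if_neg (show ¬ a = a + 1 + 1 by omega)]
    rw [hstep, ih]
    symm
    apply prod_factor h2
    · simp [upCount, downCount, pow_succ]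
      rw [if_neg (by omega)]
      ring
    · intro x hx hxa
      have h1 : ¬(a + 1 = x ∧ a = x + 1) := by omega
      have h2 : ¬(a + 1 = x ∧ a + 1 = x) := by omega
      simp [upCount, downCount, if_neg h1, if_neg h2, Ne.symm hxa]

theorem Walk.word_inj {M a l} (h : Walk M a l) :
    ∀ l', Walk M a l' → (∀ x, word x l = word x l') → l = l' := by
  induction h with
  | nil =>
    intro l' h' hw
    cases h' with
    | nil => rfl
    | up h1 h2 h3 => omega
    | down h1 h2 h3 => omega
  | @up a l h1 h2 h3 ih =>
    intro l' h' hw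
    cases h' with
    | nil => omega
    | @up _ l₂ _ _ h3' =>
      obtain ⟨r, rfl⟩ := h3.cons
      obtain ⟨r₂, rfl⟩ := h3'.cons
      congr 1
      apply ih _ h3'
      intro x
      have hx := hw x
      rcases eq_or_ne a x with rfl | hne
      · simpa [word] using hx
      · simpa [word, hne] using hx
    | @down b l₂ hb1 hb2 h3' =>
      exfalso
      obtain ⟨r, rfl⟩ := h3.cons
      obtain ⟨r₂, rfl⟩ := h3'.cons
      have hx := hw (b + 1)
      simp [word, show ¬ b = b + 1 + 1 by omega] at hx
  | @down a l h1 h2 h3 ih =>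
    intro l' h' hw
    cases h' with
    | nil => omega
    | @up _ l₂ _ _ h3' =>
      exfalso
      obtain ⟨r, rfl⟩ := h3.cons
      obtain ⟨r₂, rfl⟩ := h3'.cons
      have hx := hw (a + 1)
      simp [word, show ¬ a = a + 1 + 1 by omega] at hx
    | down hb1 hb2 h3' =>
      obtain ⟨r, rfl⟩ := h3.cons
      obtain ⟨r₂, rfl⟩ := h3'.cons
      congr 1
      apply ih _ h3'
      intro x
      have hx := hw x
      rcases eq_or_ne (a + 1) x with rfl | hne
      · simpa [word] using hx
      · simpa [word, hne] using hx

private lemma count_true_pos : ∀ {w : List Bool}, w.getLast? = some true → 1 ≤ w.count true := by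
  intro w h
  induction w with
  | nil => simp at h
  | cons c w ih =>
    cases w with
    | nil => simp at h; subst h; simp
    | cons d w' =>
      rw [List.getLast?_cons_cons] at h
      have h2 := ih h
      simp [List.count_cons] at h2 ⊢
      omega

theorem recon {M : ℕ} :
    ∀ N (a : ℕ) (w : ℕ → List Bool),
      (∑ x ∈ Finset.range M, (w x).length) ≤ N →
      1 ≤ a → a ≤ M →
      (∀ x, x = 0 ∨ M ≤ x → w x = []) →
      (∀ x, 1 ≤ x → x < M →
        (w x).count false + (if a ≤ x - 1 then 1 else 0) = (w (x - 1)).count true) →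
      (∀ x, w x ≠ [] → (w x).getLast? = some true) →
      ((w (M - 1)).count true = if a < M then 1 else 0) →
      ∃ l, Walk M a l ∧ ∀ x, word x l = w x := by
  intro N
  induction N with
  | zero =>
    intro a w hsum ha1 haM h0 hbal hlast htop
    have hemp : ∀ x, w x = [] := by
      intro x
      rcases lt_or_ge x M with hx | hx
      · have hz : ∀ y ∈ Finset.range M, (w y).length = 0 :=
          Finset.sum_eq_zero_iff.mp (Nat.le_zero.mp hsum)
        have := hz x (Finset.mem_range.mpr hx)
        exact List.length_eq_zero_iff.mp this
      · exact h0 x (Or.inr hx)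
    have haM' : a = M := by
      by_contra hne
      have halt : a < M := lt_of_le_of_ne haM hne
      rw [hemp (M - 1), if_pos halt] at htop
      simp at htop
    subst haM'
    exact ⟨[a], Walk.nil, fun x => by rw [hemp x]; rfl⟩
  | succ N ih =>
    intro a w hsum ha1 haM h0 hbal hlast htop
    rcases eq_or_lt_of_le haM with rfl | haM'
    · -- a = M : all words must be empty
      have key : ∀ j x, 1 ≤ x → x < a → a ≤ x + j → w x = [] := by
        intro j
        induction j with
        | zero => intro x hx1 hx2 hx3; omega
        | succ j ihj =>
          intro x hx1 hx2 hx3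
          rcases le_or_gt a (x + j) with hj | hj
          · exact ihj x hx1 hx2 hj
          · have hct : (w x).count true = 0 := by
              rcases eq_or_ne x (a - 1) with rfl | hxe
              · rw [htop, if_neg (by omega)]
              · have hx1M : x + 1 < a := by omega
                have hnext : w (x + 1) = [] := ihj (x + 1) (by omega) hx1M (by omega)
                have hb := hbal (x + 1) (by omega) hx1M
                rw [hnext, if_neg (by omega)] at hb
                simpa using hb.symm
            by_contra hne
            have := count_true_pos (hlast x hne)
            omega
      have hemp : ∀ x, w x = [] := by
        intro x
        rcases lt_or_ge x a with hx | hx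
        · rcases Nat.eq_zero_or_pos x with rfl | hx1
          · exact h0 0 (Or.inl rfl)
          · exact key a x hx1 hx (by omega)
        · exact h0 x (Or.inr hx)
      exact ⟨[a], Walk.nil, fun x => by rw [hemp x]; rfl⟩
    · -- a < M
      have hta : 1 ≤ (w a).count true := by
        rcases eq_or_ne a (M - 1) with ha' | ha'
        · rw [← ha'] at htop; rw [htop, if_pos haM']
        · have hb := hbal (a + 1) (by omega) (by omega)
          rw [Nat.add_sub_cancel, if_pos (le_refl a)] at hb
          omega
      have hne : w a ≠ [] := by
        intro h0'
        rw [h0'] at hta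
        simp at hta
      obtain ⟨c, tl, hwa⟩ := List.exists_cons_of_ne_nil hne
      set w' := Function.update w a tl with hw'
      have hwx : ∀ x, x ≠ a → w' x = w x := fun x hx => Function.update_of_ne hx _ _
      have hwa' : w' a = tl := Function.update_self _ _ _
      have hsum' : (∑ x ∈ Finset.range M, (w' x).length) ≤ N := by
        have haR : a ∈ Finset.range M := Finset.mem_range.mpr haM'
        rw [← Finset.add_sum_erase _ (fun x => (w' x).length) haR, hwa']
        rw [← Finset.add_sum_erase _ (fun x => (w x).length) haR, hwa] at hsum
        have hce : ∑ x ∈ (Finset.range M).erase a, (w' x).length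
            = ∑ x ∈ (Finset.range M).erase a, (w x).length :=
          Finset.sum_congr rfl fun x hx => by rw [hwx x (Finset.ne_of_mem_erase hx)]
        rw [hce]
        simp only [List.length_cons] at hsum
        omega
      have HL : ∀ x, w' x ≠ [] → (w' x).getLast? = some true := by
        intro x hx
        rcases eq_or_ne x a with rfl | hxa
        · rw [hwa'] at hx ⊢
          have hl := hlast _ hne
          rw [hwa] at hl
          obtain ⟨d, tl', rfl⟩ := List.exists_cons_of_ne_nil hx
          simpa [List.getLast?_cons_cons] using hl
        · rw [hwx x hxa] at hx ⊢
          exact hlast x hx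
      have H0 : ∀ x, x = 0 ∨ M ≤ x → w' x = [] := by
        intro x hx
        rw [hwx x (by omega), h0 x hx]
      cases c with
      | true =>
        have hct : (w a).count true = tl.count true + 1 := by rw [hwa]; simp
        have hcf : (w a).count false = tl.count false := by rw [hwa]; simp
        have HB : ∀ x, 1 ≤ x → x < M →
            (w' x).count false + (if a + 1 ≤ x - 1 then 1 else 0) = (w' (x - 1)).count true := by
          intro x hx1 hx2
          have hb := hbal x hx1 hx2
          rcases eq_or_ne a x with hxa | hxa
          · subst hxa
            rw [hwa', hwx (a - 1) (by omega), if_neg (by omega)]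
            rw [if_neg (by omega)] at hb
            omega
          · rcases eq_or_ne (a + 1) x with hxa1 | hxa1
            · subst hxa1
              rw [hwx (a + 1) (by omega), Nat.add_sub_cancel, hwa', if_neg (by omega)]
              rw [Nat.add_sub_cancel, if_pos (le_refl a)] at hb
              omega
            · rw [hwx x (by omega), hwx (x - 1) (by omega)]
              split_ifs at hb ⊢ <;> omega
        have HT : (w' (M - 1)).count true = if a + 1 < M then 1 else 0 := by
          rcases eq_or_ne a (M - 1) with ha' | ha'
          · rw [← ha', hwa', if_neg (by omega)]
            rw [← ha', if_pos haM'] at htop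
            omega
          · rw [hwx (M - 1) (Ne.symm ha'), htop, if_pos haM', if_pos (by omega)]
        obtain ⟨l', hl', hword⟩ := ih (a + 1) w' hsum' (by omega) (by omega) H0 HB HL HT
        refine ⟨a :: l', Walk.up ha1 haM' hl', ?_⟩
        intro x
        obtain ⟨r, rfl⟩ := hl'.cons
        rcases eq_or_ne a x with rfl | hxa
        · rw [show word a (a :: (a + 1) :: r) = true :: word a ((a + 1) :: r) by simp [word]]
          rw [hword a, hwa', hwa]
        · rw [show word x (a :: (a + 1) :: r) = word x ((a + 1) :: r) by simp [word, hxa]]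
          rw [hword x, hwx x (Ne.symm hxa)]
      | false =>
        have ha2 : 2 ≤ a := by
          by_contra h2'
          have ha1' : a = 1 := by omega
          have hb := hbal 1 (by omega) (by omega)
          rw [h0 0 (Or.inl rfl), if_neg (by omega)] at hb
          subst ha1'
          rw [hwa] at hb
          simp at hb
        obtain ⟨b, rfl⟩ : ∃ b, a = b + 1 := ⟨a - 1, by omega⟩
        have hb1 : 1 ≤ b := by omega
        have hct : (w (b + 1)).count true = tl.count true := by rw [hwa]; simp
        have hcf : (w (b + 1)).count false = tl.count false + 1 := by rw [hwa]; simp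
        have HB : ∀ x, 1 ≤ x → x < M →
            (w' x).count false + (if b ≤ x - 1 then 1 else 0) = (w' (x - 1)).count true := by
          intro x hx1 hx2
          have hb' := hbal x hx1 hx2
          rcases eq_or_ne (b + 1) x with hxa | hxa
          · subst hxa
            rw [hwa', hwx ((b + 1) - 1) (by omega), Nat.add_sub_cancel, if_pos (by omega)]
            rw [Nat.add_sub_cancel, if_neg (by omega)] at hb'
            omega
          · rcases eq_or_ne (b + 2) x with hxa1 | hxa1
            · subst hxa1
              rw [hwx (b + 2) (by omega), show b + 2 - 1 = b + 1 by omega, hwa', if_pos (by omega)]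
              rw [show b + 2 - 1 = b + 1 by omega, if_pos (by omega)] at hb'
              omega
            · rw [hwx x (by omega), hwx (x - 1) (by omega)]
              split_ifs at hb' ⊢ <;> omega
        have HT : (w' (M - 1)).count true = if b < M then 1 else 0 := by
          rw [if_pos (by omega)]
          rcases eq_or_ne (M - 1) (b + 1) with he | he
          · rw [he, hwa']
            rw [he, if_pos haM'] at htop
            omega
          · rw [hwx (M - 1) he, htop, if_pos haM']
        obtain ⟨l', hl', hword⟩ := ih b w' hsum' hb1 (by omega) H0 HB HL HT
        refine ⟨(b + 1) :: l', Walk.down hb1 haM' hl', ?_⟩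
        intro x
        obtain ⟨r, rfl⟩ := hl'.cons
        rcases eq_or_ne (b + 1) x with rfl | hxa
        · rw [show word (b + 1) ((b + 1) :: b :: r) = false :: word (b + 1) (b :: r) by
            simp [word, show ¬ b = b + 1 + 1 by omega]]
          rw [hword (b + 1), hwa', hwa]
        · rw [show word x ((b + 1) :: b :: r) = word x (b :: r) by simp [word, hxa]]
          rw [hword x, hwx x (Ne.symm hxa)]

private lemma count_tf (w : List Bool) : w.count true + w.count false = w.length := by
  induction w with
  | nil => simp
  | cons c w ih => cases c <;> simp [List.count_cons] <;> omega

private lemma finite_len (n : ℕ) : Finite {w : List Bool // w.length = n} := by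
  induction n with
  | zero =>
    have : Subsingleton {w : List Bool // w.length = 0} := by
      constructor
      rintro ⟨w, hw⟩ ⟨v, hv⟩
      apply Subtype.ext
      show w = v
      rw [List.length_eq_zero_iff.mp hw, List.length_eq_zero_iff.mp hv]
    exact Finite.of_subsingleton
  | succ n ihn =>
    apply Finite.of_injective (fun w : {w : List Bool // w.length = n + 1} =>
      ((w.1.headI, ⟨w.1.tail, by simp [List.length_tail, w.2]⟩) : Bool × {w : List Bool // w.length = n}))
    rintro ⟨w, hw⟩ ⟨v, hv⟩ h
    cases w with
    | nil => simp at hw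
    | cons c w' =>
      cases v with
      | nil => simp at hv
      | cons d v' =>
        simp only [List.headI, List.tail, Prod.mk.injEq, Subtype.mk.injEq] at h
        apply Subtype.ext
        show c :: w' = d :: v'
        rw [h.1, h.2]

private lemma finite_lenP (n : ℕ) (P : List Bool → Prop) :
    Finite {w : List Bool // w.length = n ∧ P w} := by
  have := finite_len n
  apply Finite.of_injective (fun w : {w : List Bool // w.length = n ∧ P w} =>
    (⟨w.1, w.2.1⟩ : {w : List Bool // w.length = n}))
  rintro ⟨w, hw⟩ ⟨v, hv⟩ h
  exact Subtype.ext (by simpa using h)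

private lemma cardW : ∀ n a : ℕ,
    Nat.card {w : List Bool // w.length = n ∧ w.count true = a} = n.choose a := by
  intro n
  induction n with
  | zero =>
    intro a
    cases a with
    | zero =>
      have : Unique {w : List Bool // w.length = 0 ∧ w.count true = 0} :=
        { default := ⟨[], by simp⟩
          uniq := fun ⟨w, hw, _⟩ => Subtype.ext (List.length_eq_zero_iff.mp hw) }
      haveI := this
      rw [Nat.card_unique, Nat.choose_self]
    | succ a =>
      have : IsEmpty {w : List Bool // w.length = 0 ∧ w.count true = a + 1} := by
        constructor
        rintro ⟨w, hw, hc⟩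
        rw [List.length_eq_zero_iff.mp hw] at hc
        simp at hc
      haveI := this
      rw [Nat.card_of_isEmpty, Nat.choose_zero_succ]
  | succ n ihn =>
    intro a
    have h1 := finite_lenP n (fun w => w.count true = a)
    have h2 := finite_lenP n (fun w => w.count true + 1 = a)
    let g : ({w : List Bool // w.length = n ∧ w.count true = a} ⊕
        {w : List Bool // w.length = n ∧ w.count true + 1 = a}) →
        {w : List Bool // w.length = n + 1 ∧ w.count true = a} := fun s =>
      match s with
      | Sum.inl w => ⟨false :: w.1, by simp [w.2.1], by simp [List.count_cons, w.2.2]⟩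
      | Sum.inr w => ⟨true :: w.1, by simp [w.2.1], by
          have := w.2.2
          simp [List.count_cons]
          omega⟩
    have hbij : Function.Bijective g := by
      constructor
      · rintro (⟨w, hw⟩ | ⟨w, hw⟩) (⟨v, hv⟩ | ⟨v, hv⟩) h <;>
          simp only [g, Subtype.mk.injEq, List.cons.injEq] at h
        · exact congrArg Sum.inl (Subtype.ext h.2)
        · exact absurd h.1 (by simp)
        · exact absurd h.1 (by simp)
        · exact congrArg Sum.inr (Subtype.ext h.2)
      · rintro ⟨w, hw, hc⟩
        cases w with
        | nil => simp at hw
        | cons c w' =>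
          cases c
          · exact ⟨Sum.inl ⟨w', by simpa using hw, by simpa [List.count_cons] using hc⟩, rfl⟩
          · refine ⟨Sum.inr ⟨w', by simpa using hw, ?_⟩, rfl⟩
            simp [List.count_cons] at hc
            omega
    have hcard := Nat.card_congr (Equiv.ofBijective g hbij)
    rw [Nat.card_sum] at hcard
    rw [← hcard, ihn a]
    cases a with
    | zero =>
      have : IsEmpty {w : List Bool // w.length = n ∧ w.count true + 1 = 0} :=
        ⟨by rintro ⟨w, hw, hc⟩; omega⟩
      haveI := this
      rw [Nat.card_of_isEmpty]
      simp
    | succ a =>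
      have he : {w : List Bool // w.length = n ∧ w.count true + 1 = a + 1} ≃
          {w : List Bool // w.length = n ∧ w.count true = a} :=
        Equiv.subtypeEquivRight (fun w => by constructor <;> (rintro ⟨h1, h2⟩; exact ⟨h1, by omega⟩))
      rw [Nat.card_congr he, ihn a, Nat.choose_succ_succ, Nat.add_comm]

private lemma finite_W2 (t f : ℕ) :
    Finite {w : List Bool // w.count true = t ∧ w.count false = f ∧ w.getLast? = some true} := by
  have := finite_lenP (t + f) (fun w => w.count true = t ∧ w.count false = f ∧ w.getLast? = some true)
  apply Finite.of_injective (fun w : {w : List Bool //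
      w.count true = t ∧ w.count false = f ∧ w.getLast? = some true} =>
    (⟨w.1, by rw [← count_tf, w.2.1, w.2.2.1], w.2⟩ :
      {w : List Bool // w.length = t + f ∧
        (w.count true = t ∧ w.count false = f ∧ w.getLast? = some true)}))
  rintro ⟨w, hw⟩ ⟨v, hv⟩ h
  exact Subtype.ext (by simpa using h)

private lemma cardW2 (t f : ℕ) (ht : 1 ≤ t) :
    Nat.card {w : List Bool // w.count true = t ∧ w.count false = f ∧ w.getLast? = some true}
      = (t + f - 1).choose (t - 1) := by
  let g : {w : List Bool // w.length = t - 1 + f ∧ w.count true = t - 1} →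
      {w : List Bool // w.count true = t ∧ w.count false = f ∧ w.getLast? = some true} := fun v =>
    ⟨v.1 ++ [true], by
      have h1 := v.2.1
      have h2 := v.2.2
      have h3 := count_tf v.1
      refine ⟨?_, ?_, ?_⟩
      · simp [List.count_append]; omega
      · simp [List.count_append]; omega
      · exact List.getLast?_concat⟩
  have hbij : Function.Bijective g := by
    constructor
    · rintro ⟨w, hw⟩ ⟨v, hv⟩ h
      simp only [g, Subtype.mk.injEq] at h
      exact Subtype.ext (by simpa using congrArg List.dropLast h)
    · rintro ⟨w, h1, h2, h3⟩
      have hsplit : w.dropLast ++ [true] = w :=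
        List.dropLast_append_getLast? true h3
      have hct : w.dropLast.count true + 1 = t := by
        rw [← h1, ← hsplit]; simp [List.count_append]
      have hcf : w.dropLast.count false = f := by
        rw [← h2, ← hsplit]; simp [List.count_append]
      have hlen : w.dropLast.length = t - 1 + f := by
        have := count_tf w.dropLast
        omega
      exact ⟨⟨w.dropLast, hlen, by omega⟩, Subtype.ext hsplit⟩
  rw [← Nat.card_congr (Equiv.ofBijective g hbij), cardW]
  congr 1
  omega

/-- Joint distribution of the up-crossing counts of the unzipping walk:
for any vector of positive integers `k` with `k (M-1) = 1`,
`P(L⁺_x = k x for all 1 ≤ x ≤ M-1)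
  = ∏_{x=2}^{M-1} C(k x + k (x-1) - 2, k x - 1) · (p x)^(k x) · (1 - p x)^(k (x-1) - 1)`. -/
theorem stmt_0 (M : ℕ) (hM : 3 ≤ M) (p : ℕ → ℝ) (hp1 : p 1 = 1)
    (hp : ∀ x, 2 ≤ x → x ≤ M - 1 → 0 < p x ∧ p x < 1)
    (k : ℕ → ℕ) (hk : ∀ x, 1 ≤ x → x ≤ M - 1 → 1 ≤ k x) (hkM : k (M - 1) = 1) :
    (∑' l : {l : List ℕ // IsPath M l ∧ ∀ x, 1 ≤ x → x ≤ M - 1 → upCount x l = k x},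
        pathProb p l.1)
      = ∏ x ∈ Finset.Icc 2 (M - 1),
          (((k x + k (x - 1) - 2).choose (k x - 1) : ℝ) * p x ^ (k x)
            * (1 - p x) ^ (k (x - 1) - 1)) := by
  classical
  have hM1 : 1 < M := by omega
  -- notation
  let fx : ℕ → ℕ := fun x => if x = 1 then 0 else k (x - 1) - 1
  let P := {l : List ℕ // IsPath M l ∧ ∀ x, 1 ≤ x → x ≤ M - 1 → upCount x l = k x}
  let fcond : (ℕ → List Bool) → Prop := fun w =>
    (∀ x, x = 0 ∨ M ≤ x → w x = []) ∧
    ∀ x, 1 ≤ x → x ≤ M - 1 → (w x).count true = k x ∧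
      (w x).count false = fx x ∧ (w x).getLast? = some true
  let Fam := {w : ℕ → List Bool // fcond w}
  let WS : ℕ → Type := fun x => {v : List Bool // v.count true = k x ∧
    v.count false = fx x ∧ v.getLast? = some true}
  -- down counts are determined
  have hdown : ∀ l, Walk M 1 l → (∀ x, 1 ≤ x → x ≤ M - 1 → upCount x l = k x) →
      ∀ x, downCount x l = (if 2 ≤ x ∧ x ≤ M - 1 then k (x - 1) - 1 else 0) := by
    intro l hw hu x
    rcases Nat.lt_or_ge x 2 with hx2 | hx2
    · rw [if_neg (by omega)]
      rcases Nat.lt_or_ge x 1 with hx1 | hx1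
      · have hx0 : x = 0 := by omega
        subst hx0
        rw [← hw.count_word_false, hw.word_empty 0 (Or.inl rfl)]
        rfl
      · have hx1' : x = 1 := by omega
        subst hx1'
        have hc := hw.cross 0 (by omega)
        rw [if_neg (by omega)] at hc
        rw [← hw.count_word_true, hw.word_empty 0 (Or.inl rfl)] at hc
        simpa using hc.symm
    · rcases Nat.lt_or_ge (M - 1) x with hxM | hxM
      · rw [if_neg (by omega)]
        rw [← hw.count_word_false, hw.word_empty x (Or.inr (by omega))]
        rfl
      · rw [if_pos ⟨hx2, hxM⟩]
        have hc := hw.cross (x - 1) (by omega)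
        rw [show x - 1 + 1 = x by omega, if_pos (by omega)] at hc
        rw [hu (x - 1) (by omega) (by omega)] at hc
        have := hk (x - 1) (by omega) (by omega)
        omega
  -- the probability of every admissible trajectory
  set C : ℝ := ∏ x ∈ Finset.Icc 1 (M - 1), (p x ^ k x * (1 - p x) ^ fx x) with hC
  have hsplit0 : Finset.range M = insert 0 (Finset.Icc 1 (M - 1)) := by
    ext y
    simp [Finset.mem_Icc, Finset.mem_range, Finset.mem_insert]
    omega
  have hconst : ∀ l : P, pathProb p l.1 = C := by
    intro l
    have hw : Walk M 1 l.1 := walk_iff_isPath.mp l.2.1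
    rw [hw.prob p, hC, hsplit0, Finset.prod_insert (by simp)]
    have h0u : upCount 0 l.1 = 0 := by
      rw [← hw.count_word_true, hw.word_empty 0 (Or.inl rfl)]
      rfl
    have h0d : downCount 0 l.1 = 0 := by
      rw [← hw.count_word_false, hw.word_empty 0 (Or.inl rfl)]
      rfl
    rw [h0u, h0d]
    simp only [pow_zero, one_mul]
    apply Finset.prod_congr rfl
    intro x hx
    rw [Finset.mem_Icc] at hx
    rw [l.2.2 x hx.1 hx.2, hdown l.1 hw l.2.2 x]
    rcases eq_or_ne x 1 with rfl | hx1
    · rw [if_neg (by omega), show fx 1 = 0 from if_pos rfl]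
    · rw [if_pos ⟨by omega, hx.2⟩, show fx x = k (x - 1) - 1 from if_neg hx1]
  -- reconstruction of trajectories from word families
  have hrec : ∀ w : ℕ → List Bool, fcond w → ∃ l, Walk M 1 l ∧ ∀ x, word x l = w x := by
    intro w hw
    apply recon (∑ x ∈ Finset.range M, (w x).length) 1 w le_rfl le_rfl (by omega) hw.1
    · intro x hx1 hx2
      rcases eq_or_ne x 1 with rfl | hx
      · rw [hw.1 0 (Or.inl rfl), (hw.2 1 le_rfl (by omega)).2.1,
          show fx 1 = 0 from if_pos rfl, if_neg (by omega)]
        rfl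
      · have hc := (hw.2 x (by omega) (by omega)).2.1
        rw [show fx x = k (x - 1) - 1 from if_neg hx] at hc
        have hc' := (hw.2 (x - 1) (by omega) (by omega)).1
        have hk' := hk (x - 1) (by omega) (by omega)
        rw [hc, hc', if_pos (by omega)]
        omega
    · intro x hxne
      by_cases hx : 1 ≤ x ∧ x ≤ M - 1
      · exact (hw.2 x hx.1 hx.2).2.2
      · exact absurd (hw.1 x (by omega)) hxne
    · rw [(hw.2 (M - 1) (by omega) (by omega)).1, hkM, if_pos hM1]
  -- the bijection between trajectories and word families
  let Φ : P → Fam := fun l => ⟨fun x => word x l.1, by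
    have hw : Walk M 1 l.1 := walk_iff_isPath.mp l.2.1
    constructor
    · intro x hx
      exact hw.word_empty x hx
    · intro x hx1 hx2
      refine ⟨by rw [hw.count_word_true]; exact l.2.2 x hx1 hx2, ?_, ?_⟩
      · rw [hw.count_word_false, hdown l.1 hw l.2.2 x]
        rcases eq_or_ne x 1 with rfl | hx1'
        · rw [if_neg (by omega), show fx 1 = 0 from if_pos rfl]
        · rw [if_pos ⟨by omega, hx2⟩, show fx x = k (x - 1) - 1 from if_neg hx1']
      · apply hw.word_last x (by omega)
        intro hempty
        have hcnt := hw.count_word_true x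
        rw [hempty] at hcnt
        have hx := l.2.2 x hx1 hx2
        have := hk x hx1 hx2
        simp at hcnt
        omega⟩
  let Ψ : Fam → P := fun w => ⟨(hrec w.1 w.2).choose, by
    obtain ⟨hwk, hwd⟩ := (hrec w.1 w.2).choose_spec
    refine ⟨walk_iff_isPath.mpr hwk, ?_⟩
    intro x hx1 hx2
    rw [← hwk.count_word_true, hwd x]
    exact (w.2.2 x hx1 hx2).1⟩
  let E1 : P ≃ Fam :=
    { toFun := Φ
      invFun := Ψ
      left_inv := by
        intro l
        apply Subtype.ext
        obtain ⟨hwk, hwd⟩ := (hrec (Φ l).1 (Φ l).2).choose_spec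
        exact hwk.word_inj _ (walk_iff_isPath.mp l.2.1) hwd
      right_inv := by
        intro w
        apply Subtype.ext
        funext x
        exact (hrec w.1 w.2).choose_spec.2 x }
  let E2 : Fam ≃ (∀ x : (Finset.Icc 1 (M - 1)), WS x.1) :=
    { toFun := fun w x => ⟨w.1 x.1,
        w.2.2 x.1 (Finset.mem_Icc.mp x.2).1 (Finset.mem_Icc.mp x.2).2⟩
      invFun := fun v => ⟨fun x => if h : x ∈ Finset.Icc 1 (M - 1) then (v ⟨x, h⟩).1 else [], by
        constructor
        · intro x hx
          have hnot : x ∉ Finset.Icc 1 (M - 1) := by rw [Finset.mem_Icc]; omega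
          simp only [dif_neg hnot]
        · intro x hx1 hx2
          have hmem : x ∈ Finset.Icc 1 (M - 1) := Finset.mem_Icc.mpr ⟨hx1, hx2⟩
          simp only [dif_pos hmem]
          exact (v ⟨x, hmem⟩).2⟩
      left_inv := by
        intro w
        apply Subtype.ext
        funext x
        by_cases h : x ∈ Finset.Icc 1 (M - 1)
        · simp only [dif_pos h]
        · simp only [dif_neg h]
          symm
          apply w.2.1
          rw [Finset.mem_Icc] at h
          omega
      right_inv := by
        intro v
        funext x
        exact Subtype.ext (by simp only [dif_pos x.2]) }
  -- finiteness
  have hfinWS : ∀ x : ℕ, Finite (WS x) := fun x => finite_W2 (k x) (fx x)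
  haveI : ∀ x : (Finset.Icc 1 (M - 1)), Finite (WS x.1) := fun x => hfinWS x.1
  haveI : Finite Fam := Finite.of_equiv _ E2.symm
  haveI : Finite P := Finite.of_equiv _ E1.symm
  haveI : Fintype P := Fintype.ofFinite _
  -- cardinality
  have hcard : Nat.card P = ∏ x ∈ Finset.Icc 1 (M - 1), (k x + fx x - 1).choose (k x - 1) := by
    rw [Nat.card_congr E1, Nat.card_congr E2, Nat.card_pi, Finset.univ_eq_attach,
      Finset.prod_attach _ (fun y => Nat.card (WS y))]
    apply Finset.prod_congr rfl
    intro x hx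
    rw [Finset.mem_Icc] at hx
    exact cardW2 (k x) (fx x) (hk x hx.1 hx.2)
  -- compute the sum
  have hsum : (∑' l : P, pathProb p l.1) = (Nat.card P : ℝ) * C := by
    rw [tsum_congr hconst, tsum_fintype, Finset.sum_const, Finset.card_univ,
      ← Nat.card_eq_fintype_card, nsmul_eq_mul]
  rw [show (∑' l : {l : List ℕ // IsPath M l ∧ ∀ x, 1 ≤ x → x ≤ M - 1 → upCount x l = k x},
      pathProb p l.1) = (∑' l : P, pathProb p l.1) from rfl, hsum, hcard, hC]
  push_cast
  rw [← Finset.prod_mul_distrib]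
  have hsplit1 : Finset.Icc 1 (M - 1) = insert 1 (Finset.Icc 2 (M - 1)) := by
    ext y
    simp [Finset.mem_Icc, Finset.mem_insert]
    omega
  rw [hsplit1, Finset.prod_insert (by simp)]
  have hone : ((k 1 + fx 1 - 1).choose (k 1 - 1) : ℝ) * (p 1 ^ k 1 * (1 - p 1) ^ fx 1) = 1 := by
    rw [show fx 1 = 0 from if_pos rfl, hp1]
    simp [Nat.choose_self]
  rw [hone, one_mul]
  apply Finset.prod_congr rfl
  intro x hx
  rw [Finset.mem_Icc] at hx
  have hkx1 := hk (x - 1) (by omega) (by omega)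
  rw [show fx x = k (x - 1) - 1 from if_neg (by omega),
    show k x + (k (x - 1) - 1) - 1 = k x + k (x - 1) - 2 by omega]
  ring
end

section
/- Consider the continuous-time unzipping process in environment b: given the sequence b, the jump chain is the unzipping walk with p_x = (1+exp(β(g_0(b_x,b_{x+1}) − g_1)))^{−1} for 2 ≤ x ≤ M−1 and p_1 = 1, and conditionally on the jump chain, the holding times of successive visits are independent exponential random variables, with rate r·(e^{−β g_0(b_x,b_{x+1})} + e^{−β g_1}) for a visit to a site x ∈ {2,…,M−1} and rate r·e^{−β g_0(b_1,b_2)} for a visit to site 1. Let S_x be the total time spent at site x before the jump chain first hits M. Then for every 2 ≤ x ≤ M−1, E[S_x] = e^{β g_0(b_x,b_{x+1})}/(r · p̄_x), where p̄_x is the probability that the jump chain started from x+1 hits M before hitting x. -/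
open scoped BigOperators Topology Classical
open Real MeasureTheory Filter

/-- The four-letter alphabet of DNA bases. -/
inductive Base : Type
  | A | T | C | G
  deriving DecidableEq

instance : Fintype Base where
  elems := {Base.A, Base.T, Base.C, Base.G}
  complete := fun x => by cases x <;> simp

/-- Up-transition probabilities of the unzipping walk in environment `c`:
`p 1 = 1` and `p x = (1 + exp(β (g₀(c_x, c_{x+1}) - g₁)))⁻¹` for `2 ≤ x ≤ M-1`. -/
noncomputable def envp (M : ℕ) (β g1 : ℝ) (g0 : Base → Base → ℝ) (c : ℕ → Base) : ℕ → ℝ :=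
  fun x => if x = 1 then 1
    else if 2 ≤ x ∧ x ≤ M - 1 then (1 + Real.exp (β * (g0 (c x) (c (x + 1)) - g1)))⁻¹
    else 0

/-- Holding rates of the continuous-time unzipping process in environment `b`:
rate `r e^{-β g₀(b_1,b_2)}` at site `1` and `r (e^{-β g₀(b_y,b_{y+1})} + e^{-β g₁})`
at a site `y ∈ {2,…,M-1}`. -/
noncomputable def rateFun (r β g1 : ℝ) (g0 : Base → Base → ℝ) (b : ℕ → Base) : ℕ → ℝ :=
  fun y => if y = 1 then r * Real.exp (-(β * g0 (b 1) (b 2)))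
    else r * (Real.exp (-(β * g0 (b y) (b (y + 1)))) + Real.exp (-(β * g1)))

namespace UZ
open List

def Step (a b : ℕ) : Prop := b = a + 1 ∨ b + 1 = a

def Traj (K : ℕ → Prop) (a c : ℕ) (l : List ℕ) : Prop :=
  l.head? = some a ∧ l.getLast? = some c ∧ l.Chain' Step ∧ ∀ y ∈ l.dropLast, K y

lemma chain_cond_iff (l : List ℕ) :
    (∀ i, i + 1 < l.length → (l.getD (i+1) 0 = l.getD i 0 + 1 ∨ l.getD (i+1) 0 + 1 = l.getD i 0)) ↔
      l.Chain' Step := by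
  rw [List.Chain', List.isChain_iff_getElem]
  constructor
  · intro h i hi
    have h2 : i + 1 < l.length := by omega
    have h1 : i < l.length := by omega
    have := h i h2
    rw [List.getD_eq_getElem _ _ h2, List.getD_eq_getElem _ _ h1] at this
    simpa [Step, List.get_eq_getElem] using this
  · intro h i hi
    have := h i (by omega)
    rw [List.getD_eq_getElem _ _ hi, List.getD_eq_getElem _ _ (by omega : i < l.length)]
    simpa [Step, List.get_eq_getElem] using this

lemma interior_cond_iff (Q : ℕ → Prop) (l : List ℕ) :
    (∀ i, i + 1 < l.length → Q (l.getD i 0)) ↔ ∀ y ∈ l.dropLast, Q y := by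
  constructor
  · intro h y hy
    obtain ⟨i, hi, rfl⟩ := List.mem_iff_getElem.mp hy
    have hi' : i < l.length - 1 := by simpa using hi
    have := h i (by omega)
    rw [List.getD_eq_getElem _ _ (by omega)] at this
    rw [List.getElem_dropLast]
    exact this
  · intro h i hi
    rw [List.getD_eq_getElem _ _ (by omega : i < l.length)]
    refine h _ ?_
    rw [List.mem_iff_getElem]
    exact ⟨i, by simp [List.length_dropLast]; omega, List.getElem_dropLast _⟩

lemma isPath_iff (M : ℕ) (l : List ℕ) :
    IsPath M l ↔ Traj (fun y => 1 ≤ y ∧ y < M) 1 M l := by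
  unfold IsPath Traj
  rw [chain_cond_iff, interior_cond_iff (fun y => 1 ≤ y ∧ y < M)]

lemma isEscapePath_iff (M x : ℕ) (l : List ℕ) :
    IsEscapePath M x l ↔ Traj (fun y => y ≠ x ∧ y ≠ M) (x+1) M l := by
  unfold IsEscapePath Traj
  rw [chain_cond_iff, interior_cond_iff (fun y => y ≠ x ∧ y ≠ M)]

lemma Traj.ne_nil {K : ℕ → Prop} {a c : ℕ} {l : List ℕ} (h : Traj K a c l) : l ≠ [] := by
  intro hl; rw [hl] at h; simp [Traj] at h

lemma Traj.length_pos {K : ℕ → Prop} {a c : ℕ} {l : List ℕ} (h : Traj K a c l) : 0 < l.length :=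
  List.length_pos_iff.mpr h.ne_nil

lemma Traj.exists_cons {K : ℕ → Prop} {a c : ℕ} {l : List ℕ} (h : Traj K a c l) :
    ∃ t, l = a :: t := by
  rcases l with _ | ⟨y, t⟩
  · exact absurd rfl h.ne_nil
  · obtain ⟨h1, -⟩ := h
    simp only [List.head?_cons, Option.some.injEq] at h1
    exact ⟨t, by rw [h1]⟩

lemma Traj.getLast_eq {K : ℕ → Prop} {a c : ℕ} {l : List ℕ} (h : Traj K a c l) :
    l.getLast h.ne_nil = c := by
  have := h.2.1
  rw [List.getLast?_eq_getLast h.ne_nil] at this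
  injection this

lemma Traj.eq_dropLast_append {K : ℕ → Prop} {a c : ℕ} {l : List ℕ} (h : Traj K a c l) :
    l = l.dropLast ++ [c] := by
  conv_lhs => rw [← List.dropLast_append_getLast h.ne_nil]
  rw [h.getLast_eq]

lemma Traj.two_le_length {K : ℕ → Prop} {a c : ℕ} {l : List ℕ} (h : Traj K a c l)
    (hac : a ≠ c) : 2 ≤ l.length := by
  rcases l with _ | ⟨y, t⟩
  · exact absurd rfl h.ne_nil
  rcases t with _ | ⟨z, t⟩
  · exfalso
    obtain ⟨h1, h2, -⟩ := h
    simp only [List.head?_cons, Option.some.injEq] at h1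
    simp only [List.getLast?_singleton, Option.some.injEq] at h2
    exact hac (h1.symm.trans h2)
  · simp only [List.length_cons]; omega

lemma Traj.singleton {K : ℕ → Prop} {a c : ℕ} (h : Traj K a c [a]) : a = c := by
  have := h.2.1; simpa using this

lemma stepProb_nonneg {p : ℕ → ℝ} (hp : ∀ n, 0 ≤ p n ∧ p n ≤ 1) (a b : ℕ) :
    0 ≤ stepProb p a b := by
  unfold stepProb
  split_ifs with h1 h2
  · exact (hp a).1
  · linarith [(hp a).2]
  · exact le_rfl
lemma pathProb_nonneg {p : ℕ → ℝ} (hp : ∀ n, 0 ≤ p n ∧ p n ≤ 1) :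
    ∀ l : List ℕ, 0 ≤ pathProb p l
  | [] => by simp [pathProb]
  | [a] => by simp [pathProb]
  | a :: b :: l => mul_nonneg (stepProb_nonneg hp a b) (pathProb_nonneg hp (b :: l))

lemma pathProb_glue (p : ℕ → ℝ) :
    ∀ (l₁ : List ℕ) (a : ℕ) (l₂ : List ℕ),
      pathProb p (l₁ ++ a :: l₂) = pathProb p (l₁ ++ [a]) * pathProb p (a :: l₂)
  | [], a, l₂ => by simp [pathProb]
  | [y], a, l₂ => by
      rcases l₂ with _ | ⟨z, l₂⟩ <;> simp [pathProb]
  | y :: z :: l₁, a, l₂ => by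
      have IH := pathProb_glue p (z :: l₁) a l₂
      simp only [List.cons_append, List.append_eq, pathProb] at IH ⊢
      rw [IH]; ring

/-- glue two paths overlapping in one point -/
def glue (u v : List ℕ) : List ℕ := u ++ v.tail

lemma glue_take_drop (w : List ℕ) (i : ℕ) : glue (w.take (i+1)) (w.drop i) = w := by
  unfold glue
  rw [List.tail_drop, List.take_append_drop]

lemma take_glue (u : List ℕ) (hu : u ≠ []) (v : List ℕ) : (glue u v).take u.length = u := by
  unfold glue; exact List.take_left

lemma drop_glue {u v : List ℕ} {x : ℕ} (hu : u ≠ []) (hul : u.getLast hu = x)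
    (hv : v.head? = some x) : (glue u v).drop (u.length - 1) = v := by
  have hu' : u = u.dropLast ++ [x] := by
    conv_lhs => rw [← List.dropLast_append_getLast hu]; rw [hul]
  rcases v with _ | ⟨y, t⟩
  · simp at hv
  simp only [List.head?_cons, Option.some.injEq] at hv
  subst hv
  have hlen : u.dropLast.length = u.length - 1 := List.length_dropLast
  have h2 : glue u (y :: t) = u.dropLast ++ (y :: t) := by
    unfold glue
    simp only [List.tail_cons]
    conv_lhs => rw [hu']
    rw [List.append_assoc, List.singleton_append]
  rw [h2, ← hlen, List.drop_left]

lemma Traj.glue_traj {K : ℕ → Prop} {a c x : ℕ} {u v : List ℕ} (hKx : K x)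
    (hu : Traj K a x u) (hv : Traj K x c v) : Traj K a c (glue u v) := by
  obtain ⟨tv, rfl⟩ := hv.exists_cons
  rcases tv with _ | ⟨z, tv⟩
  · -- v = [x], glue u v = u, and c = x
    have : x = c := hv.singleton
    subst this
    simpa [glue] using hu
  · have hu' : u = u.dropLast ++ [x] := hu.eq_dropLast_append
    refine ⟨?_, ?_, ?_, ?_⟩
    · unfold glue
      rw [List.head?_append]
      obtain ⟨tu, rfl⟩ := hu.exists_cons
      simp
    · unfold glue
      rw [List.getLast?_append]
      have := hv.2.1
      simp only [List.tail_cons]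
      rw [List.getLast?_cons_cons] at this
      simp [this]
    · unfold glue
      rw [List.Chain', List.isChain_append]
      refine ⟨hu.2.2.1, hv.2.2.1.tail, ?_⟩
      intro p hp q hq
      have hp' : x = p := by
        rw [List.getLast?_eq_getLast hu.ne_nil, hu.getLast_eq] at hp
        simpa using hp
      simp only [List.tail_cons, List.head?_cons, Option.mem_def, Option.some.injEq] at hq
      subst hp' hq
      have := hv.2.2.1
      exact (List.isChain_cons_cons.mp this).1
    · unfold glue
      intro y hy
      rw [List.dropLast_append] at hy
      simp only [List.tail_cons, List.isEmpty_cons] at hy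
      rcases List.mem_append.mp (by simpa using hy) with h | h
      · -- y ∈ u : either in dropLast or = x
        rcases List.mem_append.mp (hu' ▸ h : y ∈ u.dropLast ++ [x]) with h' | h'
        · exact hu.2.2.2 y h'
        · simp only [List.mem_singleton] at h'; subst h'; exact hKx
      · -- y ∈ (z :: tv).dropLast ⊆ v.dropLast
        have : y ∈ (x :: z :: tv).dropLast := by
          rw [List.dropLast_cons₂]
          exact List.mem_cons_of_mem _ h
        exact hv.2.2.2 y this

lemma Traj.take_traj {K : ℕ → Prop} {a c x : ℕ} {w : List ℕ} (hw : Traj K a c w)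
    {i : ℕ} (hi : i < w.length) (hx : w.getD i 0 = x) : Traj K a x (w.take (i+1)) := by
  refine ⟨?_, ?_, ?_, ?_⟩
  · obtain ⟨t, rfl⟩ := hw.exists_cons
    simp [List.take_cons]
  · have hlen : (w.take (i+1)).length = i + 1 := by
      rw [List.length_take]; omega
    rw [List.getLast?_eq_getElem?, hlen]
    simp only [Nat.add_sub_cancel]
    rw [List.getElem?_eq_getElem (by rw [hlen]; omega)]
    rw [List.getElem_take]
    rw [List.getD_eq_getElem _ _ hi] at hx
    simp [hx]
  · exact hw.2.2.1.take _
  · intro y hy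
    refine hw.2.2.2 y ?_
    have h1 : (w.take (i+1)).dropLast = w.take i := by
      rw [List.dropLast_eq_take, List.length_take, List.take_take]
      congr 1
      omega
    rw [h1] at hy
    rw [List.dropLast_eq_take]
    have : w.take i = (w.take (w.length - 1)).take i := by
      rw [List.take_take]; congr 1; omega
    rw [this] at hy
    exact List.take_subset _ _ hy

lemma Traj.drop_traj {K : ℕ → Prop} {a c x : ℕ} {w : List ℕ} (hw : Traj K a c w)
    {i : ℕ} (hi : i < w.length) (hx : w.getD i 0 = x) : Traj K x c (w.drop i) := by
  have hne : w.drop i ≠ [] := by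
    intro h
    have := List.length_drop (i := i) (l := w)  -- (w.drop i).length = w.length - i
    rw [h] at this
    simp at this
    omega
  refine ⟨?_, ?_, ?_, ?_⟩
  · rw [List.head?_drop]
    rw [List.getD_eq_getElem _ _ hi] at hx
    rw [List.getElem?_eq_getElem hi, hx]
  · have h3 : w.getLast? = ((w.drop i).getLast?).or ((w.take i).getLast?) := by
      conv_lhs => rw [← List.take_append_drop i w]
      rw [List.getLast?_append]
    rcases h : (w.drop i).getLast? with _ | y
    · exact absurd (List.getLast?_eq_none_iff.mp h) hne
    · rw [hw.2.1, h] at h3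
      simp only [Option.or] at h3
      exact h3.symm
  · exact hw.2.2.1.drop _
  · intro y hy
    refine hw.2.2.2 y ?_
    rw [List.dropLast_eq_take] at hy ⊢
    rw [List.length_drop] at hy
    have : (w.drop i).take (w.length - i - 1) = (w.take (w.length -1)).drop i := by
      rw [List.drop_take]
      congr 1
      omega
    rw [this] at hy
    exact List.drop_subset _ _ hy

lemma chain_hits : ∀ (l : List ℕ) {a c x : ℕ}, l.Chain' Step → l.head? = some a →
    l.getLast? = some c → a ≤ x → x ≤ c → x ∈ l
  | [], a, c, x, _, hh, _, _, _ => by simp at hh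
  | [y], a, c, x, _, hh, hl, h1, h2 => by
      simp only [List.head?_cons, Option.some.injEq] at hh
      simp only [List.getLast?_singleton, Option.some.injEq] at hl
      have : x = y := by omega
      simp [this]
  | y :: z :: t, a, c, x, hc, hh, hl, h1, h2 => by
      simp only [List.head?_cons, Option.some.injEq] at hh
      by_cases hxa : x = a
      · subst hxa; rw [hh]; exact List.mem_cons_self
      · obtain ⟨hstep, hc'⟩ := List.isChain_cons_cons.mp hc
        have hl' : (z :: t).getLast? = some c := by rw [← hl, List.getLast?_cons_cons]
        have hz : z ≤ x := by rcases hstep with h' | h' <;> omega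
        exact List.mem_cons_of_mem _ (chain_hits (z :: t) hc' rfl hl' hz h2)

lemma chain_lb : ∀ (l : List ℕ) {h x : ℕ}, l.Chain' Step → l.head? = some h → x < h →
    (∀ y ∈ l, y ≠ x) → ∀ y ∈ l, x < y
  | [], h, x, _, hh, _, _ => by simp
  | [b], h, x, _, hh, hlt, _ => by
      simp only [List.head?_cons, Option.some.injEq] at hh
      intro y hy
      simp only [List.mem_singleton] at hy
      omega
  | b :: d :: t, h, x, hc, hh, hlt, hne => by
      simp only [List.head?_cons, Option.some.injEq] at hh
      obtain ⟨hstep, hc'⟩ := List.isChain_cons_cons.mp hc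
      intro y hy
      rcases List.mem_cons.mp hy with rfl | hy'
      · omega
      · have hdx : d ≠ x := hne d (List.mem_cons_of_mem _ (List.mem_cons_self))
        have hxd : x < d := by rcases hstep with h' | h' <;> omega
        exact chain_lb (d :: t) hc' rfl hxd
          (fun y hy => hne y (List.mem_cons_of_mem _ hy)) y hy'

lemma chain_ub : ∀ (l : List ℕ) {h M : ℕ}, l.Chain' Step → l.head? = some h → h ≤ M →
    (∀ y ∈ l.dropLast, y ≠ M) → ∀ y ∈ l.dropLast, y < M
  | [], h, M, _, hh, _, _ => by simp
  | [b], h, M, _, hh, _, _ => by simp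
  | b :: d :: t, h, M, hc, hh, hle, hne => by
      simp only [List.head?_cons, Option.some.injEq] at hh
      obtain ⟨hstep, hc'⟩ := List.isChain_cons_cons.mp hc
      intro y hy
      rw [List.dropLast_cons₂] at hy
      have hbM : b < M := by
        have : b ≠ M := hne b (by rw [List.dropLast_cons₂]; exact List.mem_cons_self)
        omega
      rcases List.mem_cons.mp hy with rfl | hy'
      · exact hbM
      · have hd : d ≤ M := by rcases hstep with h' | h' <;> omega
        exact chain_ub (d :: t) hc' rfl hd
          (fun z hz => hne z (by rw [List.dropLast_cons₂]; exact List.mem_cons_of_mem _ hz)) y hy'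

lemma takeWhile_glue_eq (P : ℕ → Bool) :
    ∀ (l₁ : List ℕ) (a : ℕ) (l₂ : List ℕ), (∀ y ∈ l₁, P y = true) → P a = false →
      (l₁ ++ a :: l₂).takeWhile P = l₁
  | [], a, l₂, _, ha => by simp [List.takeWhile_cons, ha]
  | b :: l₁, a, l₂, h, ha => by
      have hb : P b = true := h b (List.mem_cons_self)
      simp only [List.cons_append, List.takeWhile_cons, hb, if_true]
      rw [takeWhile_glue_eq P l₁ a l₂ (fun y hy => h y (List.mem_cons_of_mem _ hy)) ha]

/-- index of the first occurrence of `x` -/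
def firstIdx (x : ℕ) (w : List ℕ) : ℕ := (w.takeWhile (fun y => decide (y ≠ x))).length

/-- index of the last occurrence of `x` -/
def lastIdx (x : ℕ) (w : List ℕ) : ℕ := w.length - 1 - firstIdx x w.reverse

lemma firstIdx_spec {x : ℕ} {w : List ℕ} (hx : x ∈ w) :
    firstIdx x w < w.length ∧ w.getD (firstIdx x w) 0 = x ∧
      w.take (firstIdx x w) = w.takeWhile (fun y => decide (y ≠ x)) ∧
      ∀ y ∈ w.take (firstIdx x w), y ≠ x := by
  set P : ℕ → Bool := fun y => decide (y ≠ x) with hP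
  have hsplit : w.takeWhile P ++ w.dropWhile P = w := List.takeWhile_append_dropWhile
  have hdw : w.dropWhile P ≠ [] := by
    intro h
    rw [h, List.append_nil] at hsplit
    have := List.mem_takeWhile_imp (p := P) (hsplit ▸ hx)
    simp [hP] at this
  have hfi : firstIdx x w = (w.takeWhile P).length := rfl
  have hlen : firstIdx x w < w.length := by
    have hl1 := congrArg List.length hsplit
    rw [List.length_append] at hl1
    have hl2 : 0 < (w.dropWhile P).length := List.length_pos_iff.mpr hdw
    rw [hfi]
    omega
  have htake : w.take (firstIdx x w) = w.takeWhile P := by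
    have := (List.prefix_iff_eq_take).mp (List.takeWhile_prefix P (l := w))
    exact this.symm
  refine ⟨hlen, ?_, htake, ?_⟩
  · have hhead : P ((w.dropWhile P).head hdw) = false := List.head_dropWhile_not P hdw
    have hheadx : (w.dropWhile P).head hdw = x := by simpa [hP] using hhead
    have hh2 : (w.dropWhile P).head? = some x := by
      rw [List.head?_eq_head hdw, hheadx]
    rcases h : w.dropWhile P with _ | ⟨b, t⟩
    · exact absurd h hdw
    rw [h] at hh2
    have hb : b = x := by simpa using hh2
    have hsplit' : w.takeWhile P ++ (b :: t) = w := by rw [← h]; exact hsplit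
    have hgd : (w.takeWhile P ++ (b :: t)).getD ((w.takeWhile P).length) 0 = b := by
      rw [List.getD_append_right _ _ _ _ (le_refl _)]
      simp
    rw [hsplit'] at hgd
    rw [hfi, hgd, hb]
  · intro y hy
    rw [htake] at hy
    have := List.mem_takeWhile_imp hy
    simpa [hP] using this

lemma lastIdx_spec {x : ℕ} {w : List ℕ} (hx : x ∈ w) :
    lastIdx x w < w.length ∧ w.getD (lastIdx x w) 0 = x ∧
      ∀ y ∈ w.drop (lastIdx x w + 1), y ≠ x := by
  have hxr : x ∈ w.reverse := List.mem_reverse.mpr hx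
  obtain ⟨h1, h2, h3, h4⟩ := firstIdx_spec hxr
  rw [List.length_reverse] at h1
  have hj : lastIdx x w = w.length - 1 - firstIdx x w.reverse := rfl
  have hjlt : lastIdx x w < w.length := by omega
  refine ⟨hjlt, ?_, ?_⟩
  · have hr : w.reverse.getD (firstIdx x w.reverse) 0 = x := h2
    have hidx : firstIdx x w.reverse < w.reverse.length := by rw [List.length_reverse]; exact h1
    rw [List.getD_eq_getElem _ _ hidx, List.getElem_reverse] at hr
    rw [List.getD_eq_getElem _ _ hjlt]
    exact hr
  · intro y hy
    have hmem : y ∈ (w.drop (lastIdx x w + 1)).reverse := List.mem_reverse.mpr hy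
    rw [List.reverse_drop] at hmem
    have hlen : w.length - (lastIdx x w + 1) = firstIdx x w.reverse := by omega
    rw [hlen] at hmem
    exact h4 y hmem

lemma pathProb_split (p : ℕ → ℝ) (w : List ℕ) (i : ℕ) (hi : i < w.length) :
    pathProb p w = pathProb p (w.take (i+1)) * pathProb p (w.drop i) := by
  have h1 : w.drop i = w[i] :: w.drop (i+1) := List.drop_eq_getElem_cons hi
  have h2 : w.take (i+1) = w.take i ++ [w[i]] := by
    rw [List.take_succ, List.getElem?_eq_getElem hi]
    rfl
  calc pathProb p w = pathProb p (w.take i ++ w.drop i) := by rw [List.take_append_drop]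
    _ = pathProb p (w.take i ++ w[i] :: w.drop (i+1)) := by rw [← h1]
    _ = pathProb p (w.take i ++ [w[i]]) * pathProb p (w[i] :: w.drop (i+1)) :=
        pathProb_glue p _ _ _
    _ = _ := by rw [← h2, ← h1]

lemma getD_glue_last {u : List ℕ} (v : List ℕ) {x : ℕ} (hu : u ≠ [])
    (hul : u.getLast? = some x) : (glue u v).getD (u.length - 1) 0 = x := by
  have hlt : u.length - 1 < u.length := by
    have : 0 < u.length := List.length_pos_iff.mpr hu
    omega
  unfold glue
  rw [List.getD_append _ _ _ _ hlt]
  rw [List.getLast?_eq_getElem?] at hul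
  rw [List.getD_eq_getElem _ _ hlt]
  rw [List.getElem?_eq_getElem hlt] at hul
  simpa using hul

lemma glue_length {u v : List ℕ} : (glue u v).length = u.length + (v.length - 1) := by
  unfold glue
  rw [List.length_append, List.length_tail]

lemma glue_eq_dropLast_append {K : ℕ → Prop} {a x : ℕ} {u : List ℕ} (hu : Traj K a x u)
    (v : List ℕ) : glue u v = u.dropLast ++ (x :: v.tail) := by
  unfold glue
  conv_lhs => rw [hu.eq_dropLast_append]
  rw [List.append_assoc, List.singleton_append]

noncomputable def splitCountEquiv (K : ℕ → Prop) (a c x : ℕ) (hKx : K x) (hxc : x ≠ c) :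
    {z : List ℕ × ℕ // Traj K a c z.1 ∧ z.2 + 1 < z.1.length ∧ z.1.getD z.2 0 = x} ≃
      ({u // Traj K a x u} × {v // Traj K x c v}) where
  toFun z := (⟨z.1.1.take (z.1.2 + 1), z.2.1.take_traj (by have := z.2.2.1; omega) z.2.2.2⟩,
              ⟨z.1.1.drop z.1.2, z.2.1.drop_traj (by have := z.2.2.1; omega) z.2.2.2⟩)
  invFun uv := ⟨(glue uv.1.1 uv.2.1, uv.1.1.length - 1), by
      refine ⟨Traj.glue_traj hKx uv.1.2 uv.2.2, ?_, ?_⟩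
      · have h1 := uv.1.2.length_pos
        have h2 := uv.2.2.two_le_length hxc
        rw [glue_length]
        omega
      · exact getD_glue_last _ uv.1.2.ne_nil uv.1.2.2.1⟩
  left_inv := by
    rintro ⟨⟨w, i⟩, hw, hi, hx⟩
    apply Subtype.ext
    simp only
    have h1 : glue (w.take (i+1)) (w.drop i) = w := glue_take_drop w i
    have hi' : i + 1 < w.length := hi
    have h2 : (w.take (i+1)).length - 1 = i := by rw [List.length_take]; omega
    rw [h1, h2]
  right_inv := by
    rintro ⟨⟨u, hu⟩, ⟨v, hv⟩⟩
    have hune : u ≠ [] := hu.ne_nil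
    have h1 : (u.length - 1) + 1 = u.length := by have := hu.length_pos; omega
    simp only [Prod.mk.injEq, Subtype.mk.injEq]
    constructor
    · rw [h1]; exact take_glue u hune v
    · exact drop_glue hune hu.getLast_eq hv.1

noncomputable def splitFirstEquiv (K : ℕ → Prop) (a c x : ℕ) (hKx : K x)
    (hvisit : ∀ w, Traj K a c w → x ∈ w) :
    {w // Traj K a c w} ≃
      ({u // Traj K a x u ∧ ∀ y ∈ u.dropLast, y ≠ x} × {v // Traj K x c v}) where
  toFun w :=
    have hspec := firstIdx_spec (hvisit w.1 w.2)
    (⟨w.1.take (firstIdx x w.1 + 1), w.2.take_traj hspec.1 hspec.2.1, by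
        intro y hy
        have hdl : (w.1.take (firstIdx x w.1 + 1)).dropLast = w.1.take (firstIdx x w.1) := by
          rw [List.dropLast_eq_take, List.length_take, List.take_take]
          congr 1
          have := hspec.1
          omega
        rw [hdl] at hy
        exact hspec.2.2.2 y hy⟩,
     ⟨w.1.drop (firstIdx x w.1), w.2.drop_traj hspec.1 hspec.2.1⟩)
  invFun uv := ⟨glue uv.1.1 uv.2.1, Traj.glue_traj hKx uv.1.2.1 uv.2.2⟩
  left_inv := by
    rintro ⟨w, hw⟩
    apply Subtype.ext
    exact glue_take_drop w _
  right_inv := by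
    rintro ⟨⟨u, hu, hux⟩, ⟨v, hv⟩⟩
    have hune : u ≠ [] := hu.ne_nil
    have hulen := hu.length_pos
    have hglue : glue u v = u.dropLast ++ (x :: v.tail) := glue_eq_dropLast_append hu v
    have hfi : firstIdx x (glue u v) = u.length - 1 := by
      unfold firstIdx
      rw [hglue, takeWhile_glue_eq _ _ _ _ (fun y hy => by simp [hux y hy]) (by simp)]
      exact List.length_dropLast
    have h1 : (u.length - 1) + 1 = u.length := by omega
    simp only [Prod.mk.injEq, Subtype.mk.injEq]
    constructor
    · rw [hfi, h1]; exact take_glue u hune v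
    · rw [hfi]; exact drop_glue hune hu.getLast_eq hv.1

noncomputable def splitLastEquiv (K : ℕ → Prop) (a c x : ℕ) (hKx : K x)
    (hvisit : ∀ w, Traj K a c w → x ∈ w) :
    {w // Traj K a c w} ≃
      ({u // Traj K a x u} × {v // Traj K x c v ∧ ∀ y ∈ v.tail, y ≠ x}) where
  toFun w :=
    have hspec := lastIdx_spec (hvisit w.1 w.2)
    (⟨w.1.take (lastIdx x w.1 + 1), w.2.take_traj hspec.1 hspec.2.1⟩,
     ⟨w.1.drop (lastIdx x w.1), w.2.drop_traj hspec.1 hspec.2.1, by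
        intro y hy
        rw [List.tail_drop] at hy
        exact hspec.2.2 y hy⟩)
  invFun uv := ⟨glue uv.1.1 uv.2.1, Traj.glue_traj hKx uv.1.2 uv.2.2.1⟩
  left_inv := by
    rintro ⟨w, hw⟩
    apply Subtype.ext
    exact glue_take_drop w _
  right_inv := by
    rintro ⟨⟨u, hu⟩, ⟨v, hv, hvx⟩⟩
    have hune : u ≠ [] := hu.ne_nil
    have hulen := hu.length_pos
    have hvlen := hv.length_pos
    have hglue : glue u v = u.dropLast ++ (x :: v.tail) := glue_eq_dropLast_append hu v
    have hrev : (glue u v).reverse = v.tail.reverse ++ (x :: u.dropLast.reverse) := by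
      rw [hglue, List.reverse_append, List.reverse_cons, List.append_assoc,
        List.singleton_append]
    have hfir : firstIdx x ((glue u v).reverse) = v.length - 1 := by
      unfold firstIdx
      rw [hrev, takeWhile_glue_eq _ _ _ _
        (fun y hy => by simp [hvx y (List.mem_reverse.mp hy)]) (by simp)]
      rw [List.length_reverse, List.length_tail]
    have hli : lastIdx x (glue u v) = u.length - 1 := by
      unfold lastIdx
      rw [hfir, glue_length]
      omega
    have h1 : (u.length - 1) + 1 = u.length := by omega
    simp only [Prod.mk.injEq, Subtype.mk.injEq]
    constructor
    · rw [hli, h1]; exact take_glue u hune v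
    · rw [hli]; exact drop_glue hune hu.getLast_eq hv.1

noncomputable def escEquiv (M x : ℕ) (hx1 : 2 ≤ x) (hx2 : x < M) :
    {v // Traj (fun y => 1 ≤ y ∧ y < M) x M v ∧ ∀ y ∈ v.tail, y ≠ x} ≃
      {l // IsEscapePath M x l} where
  toFun v := ⟨v.1.tail, by
    obtain ⟨hv, hvx⟩ := v.2
    rw [isEscapePath_iff]
    obtain ⟨t, hteq⟩ := hv.exists_cons
    have hlen2 : 2 ≤ v.1.length := hv.two_le_length (by omega)
    have hchain := hv.2.2.1
    have hlast := hv.2.1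
    have hint := hv.2.2.2
    rcases t with _ | ⟨b, t'⟩
    · rw [hteq] at hlen2; simp at hlen2
    rw [hteq] at hchain hlast hint hvx ⊢
    simp only [List.tail_cons] at hvx ⊢
    obtain ⟨hstep, hchain'⟩ := List.isChain_cons_cons.mp hchain
    rw [List.getLast?_cons_cons] at hlast
    have hb : b = x + 1 := by
      rcases hstep with h' | h'
      · exact h'
      · exfalso
        have hmem : x ∈ b :: t' := chain_hits (b :: t') hchain' rfl hlast (by omega) (by omega)
        exact hvx x hmem rfl
    refine ⟨by rw [hb]; simp, hlast, hchain', ?_⟩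
    intro y hy
    refine ⟨hvx y (List.dropLast_subset _ hy), ?_⟩
    have : y ∈ (x :: b :: t').dropLast := by
      rw [List.dropLast_cons₂]
      exact List.mem_cons_of_mem _ hy
    have := hint y this
    omega⟩
  invFun l := ⟨x :: l.1, by
    have hl := (isEscapePath_iff M x l.1).mp l.2
    obtain ⟨t, hteq⟩ := hl.exists_cons
    have hallne : ∀ y ∈ l.1, y ≠ x := by
      intro y hy
      conv at hy => rw [hl.eq_dropLast_append]
      rcases List.mem_append.mp hy with h | h
      · exact (hl.2.2.2 y h).1
      · simp only [List.mem_singleton] at h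
        omega
    refine ⟨⟨?_, ?_, ?_, ?_⟩, ?_⟩
    · simp
    · rw [hteq, List.getLast?_cons_cons, ← hteq]
      exact hl.2.1
    · rw [hteq]
      exact List.isChain_cons_cons.mpr ⟨Or.inl rfl, hteq ▸ hl.2.2.1⟩
    · intro y hy
      rw [hteq, List.dropLast_cons₂] at hy
      rcases List.mem_cons.mp hy with rfl | hy'
      · exact ⟨by omega, hx2⟩
      · have hy2 : y ∈ (↑l : List ℕ).dropLast := by rw [hteq]; exact hy'
        have h1y : x < y := chain_lb (↑l) hl.2.2.1 hl.1 (by omega) hallne y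
          (List.dropLast_subset _ hy2)
        have hyM : y < M := chain_ub (↑l) hl.2.2.1 hl.1 (by omega)
          (fun z hz => (hl.2.2.2 z hz).2) y hy2
        exact ⟨by omega, hyM⟩
    · intro y hy
      simp only [List.tail_cons] at hy
      exact hallne y hy⟩
  left_inv := by
    rintro ⟨v, hv, hvx⟩
    apply Subtype.ext
    obtain ⟨t, rfl⟩ := hv.exists_cons
    rfl
  right_inv := by
    rintro ⟨l, hl⟩
    apply Subtype.ext
    rfl

lemma step_sum_le {p : ℕ → ℝ} (hp : ∀ n, 0 ≤ p n ∧ p n ≤ 1) (a : ℕ) (B : Finset ℕ) :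
    ∑ b ∈ B, stepProb p a b ≤ 1 := by
  classical
  have h1 : ∑ b ∈ B, stepProb p a b = ∑ b ∈ B.filter (fun b => stepProb p a b ≠ 0),
      stepProb p a b := (Finset.sum_filter_ne_zero _).symm
  have hsub : B.filter (fun b => stepProb p a b ≠ 0) ⊆ ({a + 1, a - 1} : Finset ℕ) := by
    intro b hb
    simp only [Finset.mem_filter] at hb
    have := hb.2
    unfold stepProb at this
    simp only [Finset.mem_insert, Finset.mem_singleton]
    by_contra hcon
    push_neg at hcon
    rw [if_neg hcon.1] at this
    split_ifs at this with h'
    · omega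
    · exact this rfl
  have h2 : ∑ b ∈ B.filter (fun b => stepProb p a b ≠ 0), stepProb p a b ≤
      ∑ b ∈ ({a + 1, a - 1} : Finset ℕ), stepProb p a b :=
    Finset.sum_le_sum_of_subset_of_nonneg hsub (fun b _ _ => stepProb_nonneg hp a b)
  have h3 : ∑ b ∈ ({a + 1, a - 1} : Finset ℕ), stepProb p a b ≤ 1 := by
    have hne : a + 1 ≠ a - 1 := by omega
    rw [Finset.sum_pair hne]
    unfold stepProb
    rcases Nat.eq_zero_or_pos a with rfl | ha
    · norm_num
      exact (hp 0).2
    · rw [if_pos rfl, if_neg (by omega), if_pos (by omega)]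
      linarith
  linarith

lemma kraft_fin {p : ℕ → ℝ} (hp : ∀ n, 0 ≤ p n ∧ p n ≤ 1) :
    ∀ (n : ℕ) (a : ℕ) (F : Finset (List ℕ)),
      (∀ l ∈ F, l.length ≤ n ∧ l.head? = some a) →
      (∀ l₁ ∈ F, ∀ l₂ ∈ F, l₁ <+: l₂ → l₁ = l₂) →
      ∑ l ∈ F, pathProb p l ≤ 1 := by
  intro n
  induction n with
  | zero =>
    intro a F hF _
    have hemp : F = ∅ := Finset.eq_empty_of_forall_notMem (fun l hl => by
      obtain ⟨hlen, hh⟩ := hF l hl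
      rcases l with _ | ⟨y, t⟩
      · simp at hh
      · simp at hlen)
    simp [hemp]
  | succ n IH =>
    intro a F hF hpf
    classical
    by_cases hsing : [a] ∈ F
    · have hFeq : F = {[a]} := by
        apply Finset.eq_singleton_iff_unique_mem.mpr
        refine ⟨hsing, fun l hl => ?_⟩
        have hh := (hF l hl).2
        obtain ⟨t, rfl⟩ : ∃ t, l = a :: t := by
          rcases l with _ | ⟨y, t⟩
          · simp at hh
          · simp only [List.head?_cons, Option.some.injEq] at hh
            exact ⟨t, by rw [hh]⟩
        exact (hpf [a] hsing (a :: t) hl ⟨t, rfl⟩).symm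
      rw [hFeq]
      simp [pathProb]
    · have hstruct : ∀ l ∈ F, ∃ b t, l = a :: b :: t := by
        intro l hl
        obtain ⟨hlen, hh⟩ := hF l hl
        rcases l with _ | ⟨y, t⟩
        · simp at hh
        rcases t with _ | ⟨b, t'⟩
        · simp only [List.head?_cons, Option.some.injEq] at hh
          subst hh
          exact absurd hl hsing
        · simp only [List.head?_cons, Option.some.injEq] at hh
          exact ⟨b, t', by rw [hh]⟩
      set g : List ℕ → ℕ := fun l => l.getD 1 0 with hg
      have hgrp : ∑ b ∈ F.image g, ∑ l ∈ F.filter (fun l => g l = b), pathProb p l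
          = ∑ l ∈ F, pathProb p l :=
        Finset.sum_fiberwise_of_maps_to (fun l hl => Finset.mem_image_of_mem g hl) _
      rw [← hgrp]
      have hfiber : ∀ b ∈ F.image g, ∑ l ∈ F.filter (fun l => g l = b), pathProb p l ≤
          stepProb p a b := by
        intro b _
        set Fb := F.filter (fun l => g l = b) with hFb
        have hmem : ∀ l ∈ Fb, l ∈ F ∧ g l = b := fun l hl => by
          rw [hFb] at hl; exact Finset.mem_filter.mp hl
        have hsplit : ∀ l ∈ Fb, pathProb p l = stepProb p a b * pathProb p l.tail := by
          intro l hl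
          obtain ⟨hlF, hgl⟩ := hmem l hl
          obtain ⟨b', t, rfl⟩ := hstruct l hlF
          have hb' : b' = b := by simpa [hg] using hgl
          subst hb'
          rfl
        rw [Finset.sum_congr rfl hsplit, ← Finset.mul_sum]
        have htail : ∑ l ∈ Fb, pathProb p l.tail
            = ∑ m ∈ Fb.image List.tail, pathProb p m := by
          rw [Finset.sum_image ?_]
          intro l1 h1 l2 h2 heq
          obtain ⟨b1, t1, rfl⟩ := hstruct l1 (hmem l1 h1).1
          obtain ⟨b2, t2, rfl⟩ := hstruct l2 (hmem l2 h2).1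
          simpa using heq
        have hIH : ∑ m ∈ Fb.image List.tail, pathProb p m ≤ 1 := by
          apply IH b
          · intro m hm
            obtain ⟨l, hl, rfl⟩ := Finset.mem_image.mp hm
            obtain ⟨hlF, hgl⟩ := hmem l hl
            obtain ⟨b', t, rfl⟩ := hstruct l hlF
            have hb' : b' = b := by simpa [hg] using hgl
            subst hb'
            have := (hF _ hlF).1
            simp only [List.tail_cons]
            constructor
            · simpa using this
            · simp
          · intro m1 hm1 m2 hm2 hpre
            obtain ⟨l1, hl1, rfl⟩ := Finset.mem_image.mp hm1
            obtain ⟨l2, hl2, rfl⟩ := Finset.mem_image.mp hm2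
            obtain ⟨b1, t1, rfl⟩ := hstruct l1 (hmem l1 hl1).1
            obtain ⟨b2, t2, rfl⟩ := hstruct l2 (hmem l2 hl2).1
            simp only [List.tail_cons] at hpre ⊢
            have : (a :: b1 :: t1) = (a :: b2 :: t2) :=
              hpf _ (hmem _ hl1).1 _ (hmem _ hl2).1 (by
                rw [List.cons_prefix_cons]
                exact ⟨rfl, hpre⟩)
            simpa using this
        calc stepProb p a b * ∑ l ∈ Fb, pathProb p l.tail
            = stepProb p a b * ∑ m ∈ Fb.image List.tail, pathProb p m := by rw [htail]
          _ ≤ stepProb p a b * 1 := by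
              apply mul_le_mul_of_nonneg_left hIH (stepProb_nonneg hp a b)
          _ = stepProb p a b := mul_one _
      calc ∑ b ∈ F.image g, ∑ l ∈ F.filter (fun l => g l = b), pathProb p l
          ≤ ∑ b ∈ F.image g, stepProb p a b := Finset.sum_le_sum hfiber
        _ ≤ 1 := step_sum_le hp a _

lemma kraft {p : ℕ → ℝ} (hp : ∀ n, 0 ≤ p n ∧ p n ≤ 1) (S : Set (List ℕ)) (a : ℕ)
    (hhead : ∀ l ∈ S, l.head? = some a)
    (hpf : ∀ l₁ ∈ S, ∀ l₂ ∈ S, l₁ <+: l₂ → l₁ = l₂) :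
    ∑' l : S, ENNReal.ofReal (pathProb p l.1) ≤ 1 := by
  rw [ENNReal.tsum_eq_iSup_sum]
  apply iSup_le
  intro s
  classical
  have himg : ∑ m ∈ s.image Subtype.val, ENNReal.ofReal (pathProb p m)
      = ∑ l ∈ s, ENNReal.ofReal (pathProb p l.1) :=
    Finset.sum_image (fun l _ m _ h => Subtype.ext h)
  rw [← himg]
  rw [← ENNReal.ofReal_sum_of_nonneg (fun m _ => pathProb_nonneg hp m)]
  have hbound : ∑ m ∈ s.image Subtype.val, pathProb p m ≤ 1 := by
    apply kraft_fin hp ((s.image Subtype.val).sup List.length) a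
    · intro l hl
      obtain ⟨⟨l', hl'⟩, _, rfl⟩ := Finset.mem_image.mp hl
      exact ⟨Finset.le_sup hl, hhead l' hl'⟩
    · intro l1 h1 l2 h2 hpre
      obtain ⟨⟨l1', hm1⟩, _, rfl⟩ := Finset.mem_image.mp h1
      obtain ⟨⟨l2', hm2⟩, _, rfl⟩ := Finset.mem_image.mp h2
      exact hpf _ hm1 _ hm2 hpre
  calc ENNReal.ofReal (∑ m ∈ s.image Subtype.val, pathProb p m) ≤ ENNReal.ofReal 1 :=
        ENNReal.ofReal_le_ofReal hbound
    _ = 1 := ENNReal.ofReal_one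

lemma getD_last {u : List ℕ} {x : ℕ} (hu : u ≠ []) (hul : u.getLast? = some x) :
    u.getD (u.length - 1) 0 = x := by
  have hlt : u.length - 1 < u.length := by
    have : 0 < u.length := List.length_pos_iff.mpr hu
    omega
  rw [List.getLast?_eq_getElem?] at hul
  rw [List.getD_eq_getElem _ _ hlt]
  rw [List.getElem?_eq_getElem hlt] at hul
  simpa using hul

lemma prefix_free_aux {c : ℕ} {P : List ℕ → Prop}
    (hP : ∀ l, P l → l.getLast? = some c)
    (hint : ∀ l, P l → ∀ y ∈ l.dropLast, y ≠ c)
    {l₁ l₂ : List ℕ} (h₁ : P l₁) (h₂ : P l₂) (hpre : l₁ <+: l₂) : l₁ = l₂ := by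
  by_cases hlen : l₁.length = l₂.length
  · exact hpre.eq_of_length hlen
  · exfalso
    have hlt : l₁.length < l₂.length := lt_of_le_of_ne hpre.length_le hlen
    have h1ne : l₁ ≠ [] := by
      intro h; rw [h] at h₁; have := hP [] h₁; simp at this
    have h1pos : 0 < l₁.length := List.length_pos_iff.mpr h1ne
    have hc1 : l₁.getD (l₁.length - 1) 0 = c := getD_last h1ne (hP l₁ h₁)
    have hidx : l₁.length - 1 < l₁.length := by omega
    rw [List.getD_eq_getElem _ _ hidx] at hc1
    have hc2 : l₂[l₁.length - 1]'(by omega) = c := by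
      rw [← hpre.getElem hidx]; exact hc1
    have hmem : c ∈ l₂.dropLast := by
      rw [List.mem_iff_getElem]
      refine ⟨l₁.length - 1, by rw [List.length_dropLast]; omega, ?_⟩
      rw [List.getElem_dropLast]
      exact hc2
    exact hint l₂ h₂ c hmem rfl

lemma tsum_prod_mul {α β : Type} (f : α → ENNReal) (g : β → ENNReal) :
    ∑' z : α × β, f z.1 * g z.2 = (∑' a, f a) * (∑' b, g b) := by
  rw [ENNReal.tsum_prod']
  calc ∑' a, ∑' b, f a * g b = ∑' a, f a * ∑' b, g b := by
        apply tsum_congr; intro a; exact ENNReal.tsum_mul_left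
    _ = (∑' a, f a) * (∑' b, g b) := ENNReal.tsum_mul_right

lemma main_comb {p : ℕ → ℝ} (hp : ∀ n, 0 ≤ p n ∧ p n ≤ 1) {M x : ℕ}
    (hM : 3 ≤ M) (hx1 : 2 ≤ x) (hx2 : x ≤ M - 1)
    (htot : ∑' w : {w : List ℕ // IsPath M w}, ENNReal.ofReal (pathProb p w.1) = 1) :
    (∑' z : {z : List ℕ × ℕ // IsPath M z.1 ∧ z.2 + 1 < z.1.length ∧ z.1.getD z.2 0 = x},
        ENNReal.ofReal (pathProb p z.1.1)
      = (ENNReal.ofReal (p x) * ∑' l : {l : List ℕ // IsEscapePath M x l},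
          ENNReal.ofReal (pathProb p l.1))⁻¹) ∧
    (∑' l : {l : List ℕ // IsEscapePath M x l}, ENNReal.ofReal (pathProb p l.1)) ≤ 1 ∧
    (ENNReal.ofReal (p x) * ∑' l : {l : List ℕ // IsEscapePath M x l},
          ENNReal.ofReal (pathProb p l.1)) ≠ 0 := by
  classical
  set K : ℕ → Prop := fun y => 1 ≤ y ∧ y < M with hK
  have hxM : x < M := by omega
  have hKx : K x := ⟨by omega, hxM⟩
  have hxc : x ≠ M := by omega
  set q : List ℕ → ENNReal := fun l => ENNReal.ofReal (pathProb p l) with hq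
  -- transfer total mass to Traj form
  have htotT : ∑' w : {w : List ℕ // Traj K 1 M w}, q w.1 = 1 := by
    rw [← htot]
    exact (Equiv.tsum_eq (Equiv.subtypeEquivRight (fun w => isPath_iff M w))
      (fun w : {w : List ℕ // Traj K 1 M w} => q w.1)).symm
  have hvisit : ∀ w, Traj K 1 M w → x ∈ w := fun w hw =>
    chain_hits w hw.2.2.1 hw.1 hw.2.1 (by omega) (by omega)
  set A := ∑' u : {u : List ℕ // Traj K 1 x u}, q u.1 with hA
  set B := ∑' v : {v : List ℕ // Traj K x M v}, q v.1 with hB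
  set F := ∑' u : {u : List ℕ // Traj K 1 x u ∧ ∀ y ∈ u.dropLast, y ≠ x}, q u.1 with hF
  set E := ∑' v : {v : List ℕ // Traj K x M v ∧ ∀ y ∈ v.tail, y ≠ x}, q v.1 with hE
  set pb := ∑' l : {l : List ℕ // IsEscapePath M x l}, q l.1 with hpb
  -- Step 1 : NUM = A * B
  have hNUM : (∑' z : {z : List ℕ × ℕ // IsPath M z.1 ∧ z.2 + 1 < z.1.length ∧
      z.1.getD z.2 0 = x}, q z.1.1) = A * B := by
    have hstep0 : (∑' z : {z : List ℕ × ℕ // IsPath M z.1 ∧ z.2 + 1 < z.1.length ∧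
        z.1.getD z.2 0 = x}, q z.1.1)
        = ∑' z : {z : List ℕ × ℕ // Traj K 1 M z.1 ∧ z.2 + 1 < z.1.length ∧
          z.1.getD z.2 0 = x}, q z.1.1 :=
      Equiv.tsum_eq (Equiv.subtypeEquivRight
        (p := fun z : List ℕ × ℕ =>
          IsPath M z.1 ∧ z.2 + 1 < z.1.length ∧ z.1.getD z.2 0 = x)
        (q := fun z : List ℕ × ℕ =>
          Traj K 1 M z.1 ∧ z.2 + 1 < z.1.length ∧ z.1.getD z.2 0 = x)
        (fun z => and_congr (isPath_iff M z.1) Iff.rfl))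
        (fun z : {z : List ℕ × ℕ // Traj K 1 M z.1 ∧ z.2 + 1 < z.1.length ∧
          z.1.getD z.2 0 = x} => q z.1.1)
    rw [hstep0]
    calc ∑' z : {z : List ℕ × ℕ // Traj K 1 M z.1 ∧ z.2 + 1 < z.1.length ∧
          z.1.getD z.2 0 = x}, q z.1.1
        = ∑' z : {z : List ℕ × ℕ // Traj K 1 M z.1 ∧ z.2 + 1 < z.1.length ∧
            z.1.getD z.2 0 = x}, q (z.1.1.take (z.1.2 + 1)) * q (z.1.1.drop z.1.2) := by
          apply tsum_congr; intro z
          rw [hq]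
          simp only
          rw [← ENNReal.ofReal_mul (pathProb_nonneg hp _),
            ← pathProb_split p z.1.1 z.1.2 (by have := z.2.2.1; omega)]
      _ = ∑' uv : {u : List ℕ // Traj K 1 x u} × {v : List ℕ // Traj K x M v},
            q uv.1.1 * q uv.2.1 :=
          Equiv.tsum_eq (splitCountEquiv K 1 M x hKx hxc)
            (fun uv : {u : List ℕ // Traj K 1 x u} × {v : List ℕ // Traj K x M v} =>
              q uv.1.1 * q uv.2.1)
      _ = A * B := by
            rw [hA, hB]
            exact tsum_prod_mul (fun u : {u : List ℕ // Traj K 1 x u} => q u.1)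
              (fun v : {v : List ℕ // Traj K x M v} => q v.1)
  -- Step 2 : 1 = F * B
  have h2 : (1 : ENNReal) = F * B := by
    rw [← htotT]
    calc ∑' w : {w : List ℕ // Traj K 1 M w}, q w.1
        = ∑' w : {w : List ℕ // Traj K 1 M w},
            q (w.1.take (firstIdx x w.1 + 1)) * q (w.1.drop (firstIdx x w.1)) := by
          apply tsum_congr; intro w
          rw [hq]; simp only
          rw [← ENNReal.ofReal_mul (pathProb_nonneg hp _),
            ← pathProb_split p w.1 _ (firstIdx_spec (hvisit w.1 w.2)).1]
      _ = ∑' uv : {u : List ℕ // Traj K 1 x u ∧ ∀ y ∈ u.dropLast, y ≠ x} ×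
            {v : List ℕ // Traj K x M v}, q uv.1.1 * q uv.2.1 :=
          Equiv.tsum_eq (splitFirstEquiv K 1 M x hKx hvisit)
            (fun uv : {u : List ℕ // Traj K 1 x u ∧ ∀ y ∈ u.dropLast, y ≠ x} ×
              {v : List ℕ // Traj K x M v} => q uv.1.1 * q uv.2.1)
      _ = F * B := by
            rw [hF, hB]
            exact tsum_prod_mul
              (fun u : {u : List ℕ // Traj K 1 x u ∧ ∀ y ∈ u.dropLast, y ≠ x} => q u.1)
              (fun v : {v : List ℕ // Traj K x M v} => q v.1)
  -- Step 3 : 1 = A * E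
  have h3 : (1 : ENNReal) = A * E := by
    rw [← htotT]
    calc ∑' w : {w : List ℕ // Traj K 1 M w}, q w.1
        = ∑' w : {w : List ℕ // Traj K 1 M w},
            q (w.1.take (lastIdx x w.1 + 1)) * q (w.1.drop (lastIdx x w.1)) := by
          apply tsum_congr; intro w
          rw [hq]; simp only
          rw [← ENNReal.ofReal_mul (pathProb_nonneg hp _),
            ← pathProb_split p w.1 _ (lastIdx_spec (hvisit w.1 w.2)).1]
      _ = ∑' uv : {u : List ℕ // Traj K 1 x u} ×
            {v : List ℕ // Traj K x M v ∧ ∀ y ∈ v.tail, y ≠ x}, q uv.1.1 * q uv.2.1 :=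
          Equiv.tsum_eq (splitLastEquiv K 1 M x hKx hvisit)
            (fun uv : {u : List ℕ // Traj K 1 x u} ×
              {v : List ℕ // Traj K x M v ∧ ∀ y ∈ v.tail, y ≠ x} => q uv.1.1 * q uv.2.1)
      _ = A * E := by
            rw [hA, hE]
            exact tsum_prod_mul (fun u : {u : List ℕ // Traj K 1 x u} => q u.1)
              (fun v : {v : List ℕ // Traj K x M v ∧ ∀ y ∈ v.tail, y ≠ x} => q v.1)
  -- Step 4 : E = ofReal (p x) * pb
  have h4 : E = ENNReal.ofReal (p x) * pb := by
    rw [hE]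
    rw [← Equiv.tsum_eq (escEquiv M x hx1 hxM).symm
      (fun v : {v : List ℕ // Traj K x M v ∧ ∀ y ∈ v.tail, y ≠ x} => q v.1)]
    calc ∑' l : {l : List ℕ // IsEscapePath M x l}, q (x :: l.1)
        = ∑' l : {l : List ℕ // IsEscapePath M x l}, ENNReal.ofReal (p x) * q l.1 := by
          apply tsum_congr; intro l
          obtain ⟨t, ht⟩ := ((isEscapePath_iff M x l.1).mp l.2).exists_cons
          rw [hq]; simp only
          rw [ht]
          have hstep : pathProb p (x :: (x + 1) :: t) =
              p x * pathProb p ((x + 1) :: t) := by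
            show stepProb p x (x + 1) * pathProb p ((x + 1) :: t) = _
            unfold stepProb
            simp
          rw [hstep, ENNReal.ofReal_mul (hp x).1]
      _ = ENNReal.ofReal (p x) * pb := ENNReal.tsum_mul_left
  -- Kraft bounds
  have hBle : B ≤ 1 := by
    apply kraft hp {v : List ℕ | Traj K x M v} x
    · intro l hl
      obtain ⟨t, rfl⟩ := Traj.exists_cons hl
      simp
    · intro l₁ h₁ l₂ h₂ hpre
      refine prefix_free_aux (P := fun l => Traj K x M l) (fun l hl => hl.2.1) ?_ h₁ h₂ hpre
      intro l hl y hy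
      have := hl.2.2.2 y hy
      omega
  have hFle : F ≤ 1 := by
    apply kraft hp {u : List ℕ | Traj K 1 x u ∧ ∀ y ∈ u.dropLast, y ≠ x} 1
    · intro l hl
      obtain ⟨t, rfl⟩ := Traj.exists_cons hl.1
      simp
    · intro l₁ h₁ l₂ h₂ hpre
      exact prefix_free_aux (P := fun l => Traj K 1 x l ∧ ∀ y ∈ l.dropLast, y ≠ x)
        (fun l hl => hl.1.2.1) (fun l hl => hl.2) h₁ h₂ hpre
  have hpble : pb ≤ 1 := by
    apply kraft hp {l : List ℕ | IsEscapePath M x l} (x + 1)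
    · intro l hl
      exact hl.1
    · intro l₁ h₁ l₂ h₂ hpre
      refine prefix_free_aux (P := fun l => IsEscapePath M x l)
        (fun l hl => hl.2.1) ?_ h₁ h₂ hpre
      intro l hl y hy
      exact (((isEscapePath_iff M x l).mp hl).2.2.2 y hy).2
  -- conclude
  have hB1 : B = 1 := by
    apply le_antisymm hBle
    calc (1 : ENNReal) = F * B := h2
      _ ≤ 1 * B := by exact mul_le_mul_left hFle B
      _ = B := one_mul B
  have hpxle : ENNReal.ofReal (p x) ≤ 1 := by
    rw [← ENNReal.ofReal_one]
    exact ENNReal.ofReal_le_ofReal (hp x).2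
  have hEle : E ≤ 1 := by
    rw [h4]
    calc ENNReal.ofReal (p x) * pb ≤ 1 * 1 := mul_le_mul' hpxle hpble
      _ = 1 := one_mul 1
  have hEne : E ≠ 0 := by
    intro h
    rw [h, mul_zero] at h3
    exact one_ne_zero h3
  have hEnetop : E ≠ ⊤ := by
    intro h
    rw [h] at hEle
    simp at hEle
  have hAinv : A = E⁻¹ := by
    calc A = A * 1 := (mul_one A).symm
      _ = A * (E * E⁻¹) := by rw [ENNReal.mul_inv_cancel hEne hEnetop]
      _ = (A * E) * E⁻¹ := (mul_assoc A E E⁻¹).symm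
      _ = 1 * E⁻¹ := by rw [← h3]
      _ = E⁻¹ := one_mul _
  refine ⟨?_, hpble, ?_⟩
  · rw [hNUM, hB1, mul_one, hAinv, h4]
  · rw [← h4]
    exact hEne

lemma exp_moment {Ω : Type} [MeasurableSpace Ω] (P : Measure Ω) [IsProbabilityMeasure P]
    {A : Set Ω} (hA : MeasurableSet A) {T : Ω → ℝ} (hT : Measurable T) {c lam : ℝ}
    (hc : 0 ≤ c) (hlam : 0 < lam) (hPA : P A = ENNReal.ofReal c)
    (h : ∀ t : ℝ, 0 ≤ t → P (A ∩ {ω | T ω ≤ t}) =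
      ENNReal.ofReal (c * (1 - Real.exp (-(lam * t))))) :
    ∫⁻ ω in A, ENNReal.ofReal (T ω) ∂P = ENNReal.ofReal c / ENNReal.ofReal lam := by
  have h1 : ∫⁻ ω in A, ENNReal.ofReal (T ω) ∂P
      = ∫⁻ ω in A, ENNReal.ofReal (max (T ω) 0) ∂P := by
    apply lintegral_congr
    intro ω
    rcases le_or_gt 0 (T ω) with h' | h'
    · rw [max_eq_left h']
    · rw [max_eq_right h'.le, ENNReal.ofReal_of_nonpos h'.le, ENNReal.ofReal_zero]
  rw [h1]
  rw [lintegral_eq_lintegral_meas_lt (f := fun ω => max (T ω) 0) (P.restrict A)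
    (Filter.Eventually.of_forall (fun ω => le_max_right _ _))
    ((hT.max measurable_const).aemeasurable)]
  have h2 : ∀ t ∈ Set.Ioi (0:ℝ), (P.restrict A) {a | t < max (T a) 0}
      = ENNReal.ofReal (c * Real.exp (-(lam * t))) := by
    intro t ht
    simp only [Set.mem_Ioi] at ht
    have hset : {a : Ω | t < max (T a) 0} = {a : Ω | t < T a} := by
      ext a
      simp only [Set.mem_setOf_eq, lt_max_iff]
      constructor
      · rintro (h' | h')
        · exact h'
        · linarith
      · exact Or.inl
    rw [hset, Measure.restrict_apply (measurableSet_lt measurable_const hT)]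
    have hdiff : {a : Ω | t < T a} ∩ A = A \ (A ∩ {ω | T ω ≤ t}) := by
      ext a
      simp only [Set.mem_inter_iff, Set.mem_setOf_eq, Set.mem_diff, not_and, not_le]
      constructor
      · rintro ⟨h1', h2'⟩
        exact ⟨h2', fun _ => h1'⟩
      · rintro ⟨h1', h2'⟩
        exact ⟨h2' h1', h1'⟩
    rw [hdiff, measure_diff Set.inter_subset_left
      ((hA.inter (measurableSet_le hT measurable_const)).nullMeasurableSet)
      (measure_ne_top P _)]
    rw [hPA, h t ht.le]
    have hexple : Real.exp (-(lam * t)) ≤ 1 := by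
      rw [Real.exp_le_one_iff]
      nlinarith
    rw [← ENNReal.ofReal_sub _ (by nlinarith)]
    congr 1
    ring
  rw [setLIntegral_congr_fun measurableSet_Ioi h2]
  have hint : IntegrableOn (fun t : ℝ => c * Real.exp (-(lam * t))) (Set.Ioi 0) := by
    apply Integrable.const_mul
    simpa [neg_mul, IntegrableOn] using exp_neg_integrableOn_Ioi 0 hlam
  rw [← ofReal_integral_eq_lintegral_ofReal hint
    (Filter.Eventually.of_forall (fun t => by positivity))]
  have hval : ∫ t in Set.Ioi (0:ℝ), c * Real.exp (-(lam * t)) = c * (1 / lam) := by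
    rw [integral_const_mul]
    congr 1
    have h := MeasureTheory.integral_comp_mul_left_Ioi (fun u => Real.exp (-u)) 0 hlam
    simp only [mul_zero, smul_eq_mul] at h
    rw [h, integral_exp_neg_Ioi]
    simp [one_div]
  rw [hval, mul_one_div, ENNReal.ofReal_div_of_pos hlam]

lemma measurable_bind_list {Ω : Type} [MeasurableSpace Ω] {X : Ω → List ℕ}
    (hX : ∀ w : List ℕ, MeasurableSet {ω | X ω = w}) {F : List ℕ → Ω → ℝ}
    (hF : ∀ w, Measurable (F w)) : Measurable (fun ω => F (X ω) ω) := by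
  intro s hs
  have hU : (fun ω => F (X ω) ω) ⁻¹' s = ⋃ w : List ℕ, ({ω | X ω = w} ∩ (F w) ⁻¹' s) := by
    ext ω
    simp only [Set.mem_preimage, Set.mem_iUnion, Set.mem_inter_iff, Set.mem_setOf_eq]
    constructor
    · intro h; exact ⟨X ω, rfl, h⟩
    · rintro ⟨w, hw, h⟩
      rw [← hw] at h
      exact h
  rw [hU]
  exact MeasurableSet.iUnion (fun w => (hX w).inter (hF w hs))

/-- The sigma-type reindexing of visit pairs. -/
def sigEquiv (M x : ℕ) :
    {z : List ℕ × ℕ // IsPath M z.1 ∧ z.2 + 1 < z.1.length ∧ z.1.getD z.2 0 = x} ≃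
      Σ w : {w : List ℕ // IsPath M w}, {i : ℕ // i + 1 < w.1.length ∧ w.1.getD i 0 = x} where
  toFun z := ⟨⟨z.1.1, z.2.1⟩, ⟨z.1.2, z.2.2.1, z.2.2.2⟩⟩
  invFun s := ⟨(s.1.1, s.2.1), s.1.2, s.2.2.1, s.2.2.2⟩
  left_inv z := rfl
  right_inv s := rfl

end UZ

/-- For the continuous-time unzipping process (jump chain `X`, i.i.d.
exponential holding times `T i` of the indicated rates, conditionally on `X`), the total
time `S_x` spent at a site `2 ≤ x ≤ M-1` before the jump chain hits `M` satisfies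
`E[S_x] = e^{β g₀(b_x,b_{x+1})} / (r p̄_x)`. -/
theorem stmt_4 {Ω : Type} [MeasurableSpace Ω] (P : Measure Ω) [IsProbabilityMeasure P]
    (M : ℕ) (hM : 3 ≤ M) (β r g1 : ℝ) (hβ : 0 < β) (hr : 0 < r)
    (g0 : Base → Base → ℝ) (b : ℕ → Base)
    (X : Ω → List ℕ) (T : Ω → ℕ → ℝ)
    (hXmeas : ∀ w : List ℕ, MeasurableSet {ω | X ω = w})
    (hTmeas : ∀ i : ℕ, Measurable fun ω => T ω i)
    (hvalid : P {ω | IsPath M (X ω)} = 1)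
    (hjoint : ∀ w : List ℕ, IsPath M w → ∀ s : Finset ℕ, (∀ i ∈ s, i + 1 < w.length) →
      ∀ t : ℕ → ℝ, (∀ i ∈ s, 0 ≤ t i) →
      P ({ω | X ω = w} ∩ ⋂ i ∈ s, {ω | T ω i ≤ t i})
        = ENNReal.ofReal (pathProb (envp M β g1 g0 b) w *
            ∏ i ∈ s, (1 - Real.exp (-(rateFun r β g1 g0 b (w.getD i 0) * t i)))))
    (x : ℕ) (hx1 : 2 ≤ x) (hx2 : x ≤ M - 1) :
    ∫ ω, (∑ i ∈ Finset.range ((X ω).length - 1),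
        if (X ω).getD i 0 = x then T ω i else 0) ∂P
      = Real.exp (β * g0 (b x) (b (x + 1))) / (r * pbar M (envp M β g1 g0 b) x) := by
  classical
  set p' : ℕ → ℝ := envp M β g1 g0 b with hp'def
  have hp' : ∀ n, 0 ≤ p' n ∧ p' n ≤ 1 := by
    intro n
    rw [hp'def]
    unfold envp
    split_ifs with h1 h2
    · exact ⟨zero_le_one, le_rfl⟩
    · have hexp := Real.exp_pos (β * (g0 (b n) (b (n + 1)) - g1))
      refine ⟨by positivity, ?_⟩
      rw [inv_le_one₀ (by positivity)]
      linarith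
    · exact ⟨le_rfl, zero_le_one⟩
  set lam : ℝ := rateFun r β g1 g0 b x with hlamdef
  have hlamval : lam = r * (Real.exp (-(β * g0 (b x) (b (x + 1)))) + Real.exp (-(β * g1))) := by
    rw [hlamdef]; unfold rateFun; rw [if_neg (by omega)]
  have hlam : 0 < lam := by
    rw [hlamval]
    have := Real.exp_pos (-(β * g0 (b x) (b (x + 1))))
    have := Real.exp_pos (-(β * g1))
    positivity
  -- basic distributional identities
  have hPX : ∀ w, IsPath M w → P {ω | X ω = w} = ENNReal.ofReal (pathProb p' w) := by
    intro w hw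
    have h := hjoint w hw ∅ (by simp) (fun _ => 0) (by simp)
    simpa using h
  have hCDF : ∀ w, IsPath M w → ∀ i, i + 1 < w.length → ∀ t : ℝ, 0 ≤ t →
      P ({ω | X ω = w} ∩ {ω | T ω i ≤ t}) = ENNReal.ofReal (pathProb p' w *
        (1 - Real.exp (-(rateFun r β g1 g0 b (w.getD i 0) * t)))) := by
    intro w hw i hi t ht
    have h := hjoint w hw {i} (by simpa using hi) (fun _ => t) (fun _ _ => ht)
    simpa using h
  have hTiint : ∀ w, IsPath M w → ∀ i, i + 1 < w.length → w.getD i 0 = x →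
      ∫⁻ ω in {ω | X ω = w}, ENNReal.ofReal (T ω i) ∂P
        = ENNReal.ofReal (pathProb p' w) / ENNReal.ofReal lam := by
    intro w hw i hi hxi
    refine UZ.exp_moment P (hXmeas w) (hTmeas i) (UZ.pathProb_nonneg hp' w) hlam (hPX w hw) ?_
    intro t ht
    have h := hCDF w hw i hi t ht
    rw [hxi, ← hlamdef] at h
    exact h
  have hT0 : ∀ w, IsPath M w → ∀ i, i + 1 < w.length →
      P ({ω | X ω = w} ∩ {ω | T ω i ≤ 0}) = 0 := by
    intro w hw i hi
    have h := hCDF w hw i hi 0 le_rfl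
    simpa using h
  -- the partition by trajectories
  have hU : {ω | IsPath M (X ω)} = ⋃ w : {w : List ℕ // IsPath M w}, {ω | X ω = w.1} := by
    ext ω
    simp only [Set.mem_setOf_eq, Set.mem_iUnion]
    constructor
    · intro h; exact ⟨⟨X ω, h⟩, rfl⟩
    · rintro ⟨⟨w, hw⟩, h⟩
      simp only [Set.mem_setOf_eq] at h
      rw [h]; exact hw
  have hUmeas : MeasurableSet {ω | IsPath M (X ω)} := by
    rw [hU]; exact MeasurableSet.iUnion (fun w => hXmeas w.1)
  have hdisj : Pairwise (Function.onFun Disjoint fun w : {w : List ℕ // IsPath M w} =>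
      {ω | X ω = w.1}) := by
    intro w₁ w₂ hne
    simp only [Function.onFun]
    rw [Set.disjoint_left]
    intro ω h1 h2
    simp only [Set.mem_setOf_eq] at h1 h2
    exact hne (Subtype.ext (h1 ▸ h2))
  have htot : ∑' w : {w : List ℕ // IsPath M w}, ENNReal.ofReal (pathProb p' w.1) = 1 := by
    have h0 : P (⋃ w : {w : List ℕ // IsPath M w}, {ω | X ω = w.1}) = 1 := by
      rw [← hU]; exact hvalid
    rw [measure_iUnion hdisj (fun w => hXmeas w.1)] at h0
    rw [← h0]
    exact tsum_congr (fun w => (hPX w.1 w.2).symm)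
  obtain ⟨hNUM, hpble, hne0⟩ := UZ.main_comb hp' hM hx1 hx2 htot
  -- measurability of the integrand
  have hF : ∀ w : List ℕ, Measurable (fun ω => ∑ i ∈ Finset.range (w.length - 1),
      if w.getD i 0 = x then T ω i else 0) := by
    intro w
    apply Finset.measurable_sum
    intro i _
    by_cases hix : w.getD i 0 = x
    · have heq : (fun ω => if w.getD i 0 = x then T ω i else 0) = fun ω => T ω i := by
        funext ω; rw [if_pos hix]
      rw [heq]; exact hTmeas i
    · have heq : (fun ω => if w.getD i 0 = x then T ω i else 0) = fun _ => (0:ℝ) := by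
        funext ω; rw [if_neg hix]
      rw [heq]; exact measurable_const
  have hfmeas : Measurable (fun ω => ∑ i ∈ Finset.range ((X ω).length - 1),
      if (X ω).getD i 0 = x then T ω i else 0) :=
    UZ.measurable_bind_list hXmeas hF
  -- a.e. nonnegativity
  have hNbad : P ({ω | ¬ IsPath M (X ω)} ∪
      ⋃ z : {z : List ℕ × ℕ // IsPath M z.1 ∧ z.2 + 1 < z.1.length},
        ({ω | X ω = z.1.1} ∩ {ω | T ω z.1.2 ≤ 0})) = 0 := by
    apply measure_union_null
    · have : {ω | ¬ IsPath M (X ω)} = {ω | IsPath M (X ω)}ᶜ := rfl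
      rw [this, measure_compl hUmeas (measure_ne_top _ _), hvalid]
      simp
    · exact measure_iUnion_null (fun z => hT0 z.1.1 z.2.1 z.1.2 z.2.2)
  have hae : 0 ≤ᵐ[P] (fun ω => ∑ i ∈ Finset.range ((X ω).length - 1),
      if (X ω).getD i 0 = x then T ω i else 0) := by
    have hae0 : ∀ᵐ ω ∂P, ω ∉ ({ω | ¬ IsPath M (X ω)} ∪
        ⋃ z : {z : List ℕ × ℕ // IsPath M z.1 ∧ z.2 + 1 < z.1.length},
          ({ω | X ω = z.1.1} ∩ {ω | T ω z.1.2 ≤ 0})) := by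
      rw [ae_iff]
      simp only [not_not]
      simpa only [Set.setOf_mem_eq] using hNbad
    filter_upwards [hae0] with ω hω
    simp only [Set.mem_union, Set.mem_iUnion, Set.mem_inter_iff, Set.mem_setOf_eq,
      not_or, not_exists, not_and] at hω
    obtain ⟨hpath, hTpos⟩ := hω
    rw [not_not] at hpath
    apply Finset.sum_nonneg
    intro i hi
    simp only [Finset.mem_range] at hi
    by_cases hix : (X ω).getD i 0 = x
    · rw [if_pos hix]
      have hz := hTpos ⟨(X ω, i), hpath, (by show i + 1 < (X ω).length; omega)⟩ rfl
      simp only [not_le] at hz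
      exact hz.le
    · rw [if_neg hix]
  rw [MeasureTheory.integral_eq_lintegral_of_nonneg_ae hae hfmeas.aestronglyMeasurable]
  set pbE := ∑' l : {l : List ℕ // IsEscapePath M x l}, ENNReal.ofReal (pathProb p' l.1)
    with hpbEdef
  -- decompose the lintegral over trajectories
  have hL1 : ∫⁻ ω, ENNReal.ofReal (∑ i ∈ Finset.range ((X ω).length - 1),
      if (X ω).getD i 0 = x then T ω i else 0) ∂P
      = ∑' w : {w : List ℕ // IsPath M w},
          ∫⁻ ω in {ω | X ω = w.1}, ENNReal.ofReal (∑ i ∈ Finset.range ((X ω).length - 1),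
            if (X ω).getD i 0 = x then T ω i else 0) ∂P := by
    rw [← lintegral_add_compl (fun ω => ENNReal.ofReal (∑ i ∈ Finset.range ((X ω).length - 1),
      if (X ω).getD i 0 = x then T ω i else 0)) hUmeas]
    have hc0 : P {ω | IsPath M (X ω)}ᶜ = 0 := by
      rw [measure_compl hUmeas (measure_ne_top _ _), hvalid]; simp
    rw [setLIntegral_measure_zero _ _ hc0, add_zero]
    rw [hU, lintegral_iUnion (fun w : {w : List ℕ // IsPath M w} => hXmeas w.1) hdisj]
  have hLw : ∀ w : {w : List ℕ // IsPath M w},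
      ∫⁻ ω in {ω | X ω = w.1}, ENNReal.ofReal (∑ i ∈ Finset.range ((X ω).length - 1),
          if (X ω).getD i 0 = x then T ω i else 0) ∂P
        = ∑ i ∈ Finset.range (w.1.length - 1), (if w.1.getD i 0 = x then
            ENNReal.ofReal (pathProb p' w.1) / ENNReal.ofReal lam else 0) := by
    rintro ⟨w, hw⟩
    simp only
    have hnull : P ({ω | X ω = w} ∩ ⋃ i ∈ Finset.range (w.length - 1), {ω | T ω i ≤ 0}) = 0 := by
      have hsub : ({ω | X ω = w} ∩ ⋃ i ∈ Finset.range (w.length - 1), {ω | T ω i ≤ 0})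
          ⊆ ⋃ i ∈ Finset.range (w.length - 1), ({ω | X ω = w} ∩ {ω | T ω i ≤ 0}) := by
        rintro ω ⟨h1, h2⟩
        simp only [Set.mem_iUnion] at h2 ⊢
        obtain ⟨i, hi, h3⟩ := h2
        exact ⟨i, hi, h1, h3⟩
      apply measure_mono_null hsub
      apply (measure_biUnion_null_iff (Finset.countable_toSet _)).mpr
      intro i hi
      simp only [Finset.mem_coe, Finset.mem_range] at hi
      exact hT0 w hw i (by omega)
    have hae2 : ∀ᵐ ω ∂(P.restrict {ω | X ω = w}),
        ENNReal.ofReal (∑ i ∈ Finset.range ((X ω).length - 1),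
          if (X ω).getD i 0 = x then T ω i else 0)
        = ∑ i ∈ Finset.range (w.length - 1),
            (if w.getD i 0 = x then ENNReal.ofReal (T ω i) else 0) := by
      rw [ae_restrict_iff' (hXmeas w)]
      have hae3 : ∀ᵐ ω ∂P, ω ∉ ({ω | X ω = w} ∩
          ⋃ i ∈ Finset.range (w.length - 1), {ω | T ω i ≤ 0}) := by
        rw [ae_iff]
        simp only [not_not]
        simpa only [Set.setOf_mem_eq] using hnull
      filter_upwards [hae3] with ω hω hmem
      have hpos : ∀ i ∈ Finset.range (w.length - 1),
          0 ≤ if w.getD i 0 = x then T ω i else 0 := by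
        intro i hi
        by_cases hix : w.getD i 0 = x
        · rw [if_pos hix]
          by_contra hcon
          push_neg at hcon
          exact hω ⟨hmem, Set.mem_biUnion hi hcon.le⟩
        · rw [if_neg hix]
      rw [hmem]
      rw [ENNReal.ofReal_sum_of_nonneg hpos]
      apply Finset.sum_congr rfl
      intro i hi
      by_cases hix : w.getD i 0 = x
      · rw [if_pos hix, if_pos hix]
      · rw [if_neg hix, if_neg hix, ENNReal.ofReal_zero]
    rw [lintegral_congr_ae hae2]
    have hmeasi : ∀ i ∈ Finset.range (w.length - 1), AEMeasurable
        (fun ω => if w.getD i 0 = x then ENNReal.ofReal (T ω i) else 0)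
        (P.restrict {ω | X ω = w}) := by
      intro i _
      by_cases hix : w.getD i 0 = x
      · have heq : (fun ω => if w.getD i 0 = x then ENNReal.ofReal (T ω i) else 0)
            = fun ω => ENNReal.ofReal (T ω i) := by funext ω; rw [if_pos hix]
        rw [heq]
        exact ((hTmeas i).ennreal_ofReal).aemeasurable
      · have heq : (fun ω => if w.getD i 0 = x then ENNReal.ofReal (T ω i) else 0)
            = fun _ => (0 : ENNReal) := by funext ω; rw [if_neg hix]
        rw [heq]
        exact aemeasurable_const
    rw [lintegral_finset_sum' _ hmeasi]
    apply Finset.sum_congr rfl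
    intro i hi
    simp only [Finset.mem_range] at hi
    by_cases hix : w.getD i 0 = x
    · rw [if_pos hix]
      calc ∫⁻ ω in {ω | X ω = w}, (if w.getD i 0 = x then ENNReal.ofReal (T ω i) else 0) ∂P
          = ∫⁻ ω in {ω | X ω = w}, ENNReal.ofReal (T ω i) ∂P := by
            apply lintegral_congr; intro ω; rw [if_pos hix]
        _ = ENNReal.ofReal (pathProb p' w) / ENNReal.ofReal lam :=
            hTiint w hw i (by omega) hix
    · rw [if_neg hix]
      calc ∫⁻ ω in {ω | X ω = w}, (if w.getD i 0 = x then ENNReal.ofReal (T ω i) else 0) ∂P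
          = ∫⁻ _ in {ω | X ω = w}, (0 : ENNReal) ∂P := by
            apply lintegral_congr; intro ω; rw [if_neg hix]
        _ = 0 := lintegral_zero
  -- reindex the double sum as the pair sum
  have hsigma : (∑' z : {z : List ℕ × ℕ // IsPath M z.1 ∧ z.2 + 1 < z.1.length ∧
      z.1.getD z.2 0 = x}, ENNReal.ofReal (pathProb p' z.1.1))
      = ∑' w : {w : List ℕ // IsPath M w}, ∑ i ∈ Finset.range (w.1.length - 1),
          (if w.1.getD i 0 = x then ENNReal.ofReal (pathProb p' w.1) else 0) := by
    have h1 : (∑' z : {z : List ℕ × ℕ // IsPath M z.1 ∧ z.2 + 1 < z.1.length ∧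
        z.1.getD z.2 0 = x}, ENNReal.ofReal (pathProb p' z.1.1))
        = ∑' s : (Σ w : {w : List ℕ // IsPath M w},
            {i : ℕ // i + 1 < w.1.length ∧ w.1.getD i 0 = x}),
          ENNReal.ofReal (pathProb p' s.1.1) :=
      (Equiv.tsum_eq (UZ.sigEquiv M x).symm
        (fun z : {z : List ℕ × ℕ // IsPath M z.1 ∧ z.2 + 1 < z.1.length ∧
          z.1.getD z.2 0 = x} => ENNReal.ofReal (pathProb p' z.1.1))).symm
    rw [h1, ENNReal.tsum_sigma']
    apply tsum_congr
    intro w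
    have h2 : (∑' i : {i : ℕ // i + 1 < w.1.length ∧ w.1.getD i 0 = x},
        ENNReal.ofReal (pathProb p' w.1))
        = ∑' i : ℕ, ({i : ℕ | i + 1 < w.1.length ∧ w.1.getD i 0 = x}).indicator
            (fun _ => ENNReal.ofReal (pathProb p' w.1)) i :=
      tsum_subtype {i : ℕ | i + 1 < w.1.length ∧ w.1.getD i 0 = x}
        (fun _ => ENNReal.ofReal (pathProb p' w.1))
    rw [h2]
    rw [tsum_eq_sum (s := Finset.range (w.1.length - 1))
      (fun i hi => Set.indicator_of_notMem (fun hcon => by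
        simp only [Finset.mem_range, not_lt] at hi
        have := hcon.1
        omega) _)]
    apply Finset.sum_congr rfl
    intro i hi
    simp only [Finset.mem_range] at hi
    rw [Set.indicator_apply]
    by_cases hix : w.1.getD i 0 = x
    · rw [if_pos (by exact ⟨by omega, hix⟩), if_pos hix]
    · rw [if_neg (fun hcon => hix hcon.2), if_neg hix]
  rw [hL1, tsum_congr hLw]
  have hfac : (∑' w : {w : List ℕ // IsPath M w}, ∑ i ∈ Finset.range (w.1.length - 1),
      (if w.1.getD i 0 = x then ENNReal.ofReal (pathProb p' w.1) / ENNReal.ofReal lam else 0))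
      = (∑' w : {w : List ℕ // IsPath M w}, ∑ i ∈ Finset.range (w.1.length - 1),
          (if w.1.getD i 0 = x then ENNReal.ofReal (pathProb p' w.1) else 0))
        * (ENNReal.ofReal lam)⁻¹ := by
    rw [← ENNReal.tsum_mul_right]
    apply tsum_congr; intro w
    rw [Finset.sum_mul]
    apply Finset.sum_congr rfl
    intro i _
    by_cases hix : w.1.getD i 0 = x
    · rw [if_pos hix, if_pos hix, div_eq_mul_inv]
    · rw [if_neg hix, if_neg hix, zero_mul]
  rw [hfac, ← hsigma, hNUM]
  -- numeric conclusion
  have hlamne : ENNReal.ofReal lam ≠ 0 := (ENNReal.ofReal_pos.mpr hlam).ne'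
  have hpbEne : pbE ≠ 0 := by
    intro h
    rw [h, mul_zero] at hne0
    exact hne0 rfl
  have hpbEtop : pbE ≠ ⊤ := ne_top_of_le_ne_top ENNReal.one_ne_top hpble
  have hcomb : (ENNReal.ofReal (p' x) * pbE)⁻¹ * (ENNReal.ofReal lam)⁻¹
      = (ENNReal.ofReal (p' x) * pbE * ENNReal.ofReal lam)⁻¹ :=
    (ENNReal.mul_inv (Or.inl hne0) (Or.inr hlamne)).symm
  rw [hcomb, ENNReal.toReal_inv, ENNReal.toReal_mul, ENNReal.toReal_mul,
    ENNReal.toReal_ofReal (hp' x).1, ENNReal.toReal_ofReal hlam.le]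
  have hsumnn : Summable (fun l : {l : List ℕ // IsEscapePath M x l} =>
      (pathProb p' l.1).toNNReal) := by
    rw [← ENNReal.tsum_coe_ne_top_iff_summable]
    have hco : ∀ l : {l : List ℕ // IsEscapePath M x l},
        ((pathProb p' l.1).toNNReal : ENNReal) = ENNReal.ofReal (pathProb p' l.1) :=
      fun l => rfl
    rw [tsum_congr hco, ← hpbEdef]
    exact hpbEtop
  have hpbar : pbar M p' x = pbE.toReal := by
    unfold pbar
    have h1 : ∀ l : {l : List ℕ // IsEscapePath M x l},
        pathProb p' l.1 = ((pathProb p' l.1).toNNReal : ℝ) :=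
      fun l => (Real.coe_toNNReal _ (UZ.pathProb_nonneg hp' l.1)).symm
    rw [tsum_congr h1, ← NNReal.coe_tsum]
    have h2 : pbE = ((∑' l : {l : List ℕ // IsEscapePath M x l},
        (pathProb p' l.1).toNNReal : NNReal) : ENNReal) := by
      rw [ENNReal.coe_tsum hsumnn, hpbEdef]
      rfl
    rw [h2, ENNReal.coe_toReal]
  have hpbpos : 0 < pbE.toReal := ENNReal.toReal_pos hpbEne hpbEtop
  rw [hpbar]
  have hpxval : p' x = (1 + Real.exp (β * (g0 (b x) (b (x + 1)) - g1)))⁻¹ := by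
    rw [hp'def]; unfold envp; rw [if_neg (by omega), if_pos ⟨hx1, hx2⟩]
  have hkey : p' x * lam = r * Real.exp (-(β * g0 (b x) (b (x + 1)))) := by
    rw [hpxval, hlamval]
    have hfact : Real.exp (-(β * g0 (b x) (b (x + 1)))) + Real.exp (-(β * g1))
        = Real.exp (-(β * g0 (b x) (b (x + 1)))) *
          (1 + Real.exp (β * (g0 (b x) (b (x + 1)) - g1))) := by
      rw [mul_add, mul_one, ← Real.exp_add]
      ring_nf
    rw [hfact]
    have hne : (1 + Real.exp (β * (g0 (b x) (b (x + 1)) - g1))) ≠ 0 := by positivity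
    field_simp
  rw [show p' x * pbE.toReal * lam = (p' x * lam) * pbE.toReal by ring, hkey]
  rw [eq_div_iff (by positivity)]
  rw [Real.exp_neg]
  have hexppos := Real.exp_pos (β * g0 (b x) (b (x + 1)))
  field_simp
end

section
/- Fix β > 0 and a ∈ ℝ, and define G_a(u) := log((1+e^{βu})/(1+e^{βa})) + e^{βa}·log((1+e^{−βu})/(1+e^{−βa})) for u ∈ ℝ. Then G_a(u) ≥ 0 for all u ∈ ℝ, G_a(a) = 0, and G_a(u) > 0 whenever u ≠ a. -/
open scoped BigOperators Topology Classical
open Real MeasureTheory Filter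

/-- The function `G_a(u) = log((1+e^{βu})/(1+e^{βa})) + e^{βa}·log((1+e^{-βu})/(1+e^{-βa}))`. -/
noncomputable def Gfun (β a u : ℝ) : ℝ :=
  Real.log ((1 + Real.exp (β * u)) / (1 + Real.exp (β * a)))
    + Real.exp (β * a) * Real.log ((1 + Real.exp (-(β * u))) / (1 + Real.exp (-(β * a))))

private lemma fder (c y : ℝ) (hy : 0 < y) :
    HasDerivAt (fun x => (1+c)*Real.log (1+x) - c*Real.log x)
      ((1+c) * (1/(1+y)) - c * y⁻¹) y := by
  have h1 : HasDerivAt (fun x : ℝ => 1 + x) 1 y := (hasDerivAt_id y).const_add 1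
  have h2 := (h1.log (by positivity)).const_mul (1+c)
  have h3 := (Real.hasDerivAt_log hy.ne').const_mul c
  have h4 := h2.sub h3
  simp only [one_div] at h4 ⊢
  exact h4

private lemma mainineq (c x : ℝ) (hc : 0 < c) (hx : 0 < x) (hne : x ≠ c) :
    (1+c)*Real.log (1+c) - c*Real.log c < (1+c)*Real.log (1+x) - c*Real.log x := by
  set f : ℝ → ℝ := fun x => (1+c)*Real.log (1+x) - c*Real.log x with hf
  have hdsign : ∀ y : ℝ, 0 < y →
      (1+c) * (1/(1+y)) - c * y⁻¹ = (y - c)/(y*(1+y)) := by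
    intro y hy
    field_simp
    ring
  rcases hne.lt_or_gt with h | h
  · -- x < c : f strictly anti on Icc x c
    have hanti : StrictAntiOn f (Set.Icc x c) := by
      apply strictAntiOn_of_deriv_neg (convex_Icc x c)
      · intro y hy
        exact ((fder c y (lt_of_lt_of_le hx hy.1)).differentiableAt).continuousAt.continuousWithinAt
      · intro y hy
        rw [interior_Icc] at hy
        have hy0 : 0 < y := lt_trans hx hy.1
        rw [(fder c y hy0).deriv, hdsign y hy0]
        apply div_neg_of_neg_of_pos (by linarith [hy.2]) (by positivity)
    have := hanti (Set.left_mem_Icc.mpr h.le) (Set.right_mem_Icc.mpr h.le) h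
    simpa [hf] using this
  · -- c < x : f strictly mono on Icc c x
    have hmono : StrictMonoOn f (Set.Icc c x) := by
      apply strictMonoOn_of_deriv_pos (convex_Icc c x)
      · intro y hy
        exact ((fder c y (lt_of_lt_of_le hc hy.1)).differentiableAt).continuousAt.continuousWithinAt
      · intro y hy
        rw [interior_Icc] at hy
        have hy0 : 0 < y := lt_trans hc hy.1
        rw [(fder c y hy0).deriv, hdsign y hy0]
        apply div_pos (by linarith [hy.1]) (by positivity)
    have := hmono (Set.left_mem_Icc.mpr h.le) (Set.right_mem_Icc.mpr h.le) h
    simpa [hf] using this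

private lemma Gfun_eq (β a u : ℝ) :
    Gfun β a u =
      ((1 + Real.exp (β*a)) * Real.log (1 + Real.exp (β*u))
        - Real.exp (β*a) * Real.log (Real.exp (β*u)))
      - ((1 + Real.exp (β*a)) * Real.log (1 + Real.exp (β*a))
        - Real.exp (β*a) * Real.log (Real.exp (β*a))) := by
  set x := Real.exp (β*u) with hxdef
  set c := Real.exp (β*a) with hcdef
  have hx : 0 < x := Real.exp_pos _
  have hc : 0 < c := Real.exp_pos _
  have hx1 : (0:ℝ) < 1 + x := by positivity
  have hc1 : (0:ℝ) < 1 + c := by positivity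
  have e1 : Real.exp (-(β*u)) = x⁻¹ := by rw [Real.exp_neg]
  have e2 : Real.exp (-(β*a)) = c⁻¹ := by rw [Real.exp_neg]
  have h1 : (1 + x⁻¹)/(1+c⁻¹) = (c*(1+x))/(x*(1+c)) := by
    field_simp
    ring
  rw [Gfun, e1, e2, h1, Real.log_div hx1.ne' hc1.ne',
    Real.log_div (by positivity) (by positivity),
    Real.log_mul hc.ne' hx1.ne', Real.log_mul hx.ne' hc1.ne']
  ring

/-- `G_a(u) ≥ 0` for all `u`, `G_a(a) = 0`, and `G_a(u) > 0` for `u ≠ a`. -/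
theorem stmt_8 (β a : ℝ) (hβ : 0 < β) :
    (∀ u : ℝ, 0 ≤ Gfun β a u) ∧ Gfun β a a = 0 ∧ ∀ u : ℝ, u ≠ a → 0 < Gfun β a u := by
  have hzero : Gfun β a a = 0 := by rw [Gfun_eq]; ring
  have hpos : ∀ u : ℝ, u ≠ a → 0 < Gfun β a u := by
    intro u hu
    have hne : Real.exp (β*u) ≠ Real.exp (β*a) := by
      simp only [ne_eq, Real.exp_eq_exp]
      exact fun h => hu (mul_left_cancel₀ hβ.ne' h)
    have := mainineq (Real.exp (β*a)) (Real.exp (β*u)) (Real.exp_pos _) (Real.exp_pos _) hne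
    rw [Gfun_eq]
    linarith
  refine ⟨fun u => ?_, hzero, hpos⟩
  by_cases h : u = a
  · rw [h, hzero]
  · exact (hpos u h).le
end

section
/- Fix reals a > 0 > u, and for β > 0 define G_{a,β}(u) := log((1+e^{βu})/(1+e^{βa})) + e^{βa}·log((1+e^{−βu})/(1+e^{−βa})). Then lim_{β→∞} G_{a,β}(u)/(β·e^{βa}) = −u; in particular G_{a,β}(u) grows exponentially fast in β. -/
open scoped BigOperators Topology Classical
open Real MeasureTheory Filter

lemma logexp_shift (x : ℝ) :
    Real.log (1 + Real.exp x) = x + Real.log (1 + Real.exp (-x)) := by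
  have h : (1:ℝ) + Real.exp x = Real.exp x * (1 + Real.exp (-x)) := by
    rw [mul_add, mul_one, ← Real.exp_add]
    simp [add_comm]
  rw [h, Real.log_mul (Real.exp_pos x).ne' (by positivity), Real.log_exp]

lemma tendsto_log_one_add_exp {c : ℝ} (hc : c < 0) :
    Filter.Tendsto (fun β : ℝ => Real.log (1 + Real.exp (β * c))) Filter.atTop (𝓝 0) := by
  have h1 : Filter.Tendsto (fun β : ℝ => β * c) Filter.atTop Filter.atBot :=
    Filter.tendsto_id.atTop_mul_const_of_neg hc
  have h2 : Filter.Tendsto (fun β : ℝ => Real.exp (β * c)) Filter.atTop (𝓝 0) :=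
    Real.tendsto_exp_atBot.comp h1
  have h3 : Filter.Tendsto (fun β : ℝ => 1 + Real.exp (β * c)) Filter.atTop (𝓝 1) := by
    simpa using tendsto_const_nhds.add h2
  have h4 := (Real.continuousAt_log (by norm_num : (1:ℝ) ≠ 0)).tendsto.comp h3
  simpa [Function.comp_def] using h4

/-- For fixed `a > 0 > u`, `G_{a,β}(u)/(β e^{βa}) → -u` as `β → ∞`. -/
theorem stmt_11 (a u : ℝ) (ha : 0 < a) (hu : u < 0) :
    Filter.Tendsto (fun β : ℝ => Gfun β a u / (β * Real.exp (β * a)))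
      Filter.atTop (𝓝 (-u)) := by
  have hE : Filter.Tendsto (fun β : ℝ => Real.exp (β * a)) Filter.atTop Filter.atTop :=
    Real.tendsto_exp_atTop.comp (Filter.tendsto_id.atTop_mul_const ha)
  have hβE : Filter.Tendsto (fun β : ℝ => β * Real.exp (β * a)) Filter.atTop Filter.atTop :=
    Filter.tendsto_id.atTop_mul_atTop₀ hE
  have hβEinv : Filter.Tendsto (fun β : ℝ => (β * Real.exp (β * a))⁻¹) Filter.atTop (𝓝 0) :=
    hβE.inv_tendsto_atTop
  have hEinv : Filter.Tendsto (fun β : ℝ => (Real.exp (β * a))⁻¹) Filter.atTop (𝓝 0) :=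
    hE.inv_tendsto_atTop
  have hβinv : Filter.Tendsto (fun β : ℝ => β⁻¹) Filter.atTop (𝓝 0) :=
    tendsto_inv_atTop_zero
  have hL1 : Filter.Tendsto (fun β : ℝ => Real.log (1 + Real.exp (β * u)))
      Filter.atTop (𝓝 0) := tendsto_log_one_add_exp hu
  have hL2 : Filter.Tendsto (fun β : ℝ => Real.log (1 + Real.exp (-(β * a))))
      Filter.atTop (𝓝 0) := by
    have := tendsto_log_one_add_exp (neg_neg_iff_pos.mpr ha : -a < 0)
    simpa [mul_neg] using this
  have h0 : Filter.Tendsto (fun β : ℝ =>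
      Real.log (1 + Real.exp (β * u)) * (β * Real.exp (β * a))⁻¹
        - a * (Real.exp (β * a))⁻¹
        - Real.log (1 + Real.exp (-(β * a))) * (β * Real.exp (β * a))⁻¹
        + Real.log (1 + Real.exp (β * u)) * β⁻¹
        - Real.log (1 + Real.exp (-(β * a))) * β⁻¹) Filter.atTop (𝓝 0) := by
    have := ((((hL1.mul hβEinv).sub ((tendsto_const_nhds : Filter.Tendsto (fun _ : ℝ => a) Filter.atTop (𝓝 a)).mul hEinv)).sub
      (hL2.mul hβEinv)).add (hL1.mul hβinv)).sub (hL2.mul hβinv)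
    simpa using this
  have hlim : Filter.Tendsto (fun β : ℝ => -u +
      (Real.log (1 + Real.exp (β * u)) * (β * Real.exp (β * a))⁻¹
        - a * (Real.exp (β * a))⁻¹
        - Real.log (1 + Real.exp (-(β * a))) * (β * Real.exp (β * a))⁻¹
        + Real.log (1 + Real.exp (β * u)) * β⁻¹
        - Real.log (1 + Real.exp (-(β * a))) * β⁻¹)) Filter.atTop (𝓝 (-u)) := by
    simpa using tendsto_const_nhds.add h0
  refine hlim.congr' ?_
  filter_upwards [Filter.eventually_gt_atTop 0] with β hβ
  have hβne : β ≠ 0 := ne_of_gt hβ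
  have hEne : Real.exp (β * a) ≠ 0 := (Real.exp_pos _).ne'
  unfold Gfun
  rw [Real.log_div (by positivity) (by positivity),
    Real.log_div (by positivity) (by positivity),
    logexp_shift (β * a), logexp_shift (-(β * u)), neg_neg]
  field_simp
  ring
end

section
/- Let B = {A,T,C,G}, let g_0 : B × B → ℝ satisfy Hypothesis (Hyp1), let β > 0, let b ∈ B^M, and let w_1,…,w_{M−1} be strictly positive reals. Define Φ(α) := Σ_{x=1}^{M−1} w_x·( β g_0(α_x,α_{x+1}) + exp(−β( g_0(α_x,α_{x+1}) − g_0(b_x,b_{x+1}) )) ) for α ∈ B^M. Then among all α ∈ B^M with α_1 = b_1, the function Φ attains its minimum uniquely at α = b; that is, Φ(α) > Φ(b) for every α ≠ b with α_1 = b_1. -/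
open scoped BigOperators Topology Classical
open Real MeasureTheory Filter

/-- The function `Φ(α) = Σ_{x=1}^{M-1} w_x (β g₀(α_x,α_{x+1})
  + exp(-β(g₀(α_x,α_{x+1}) - g₀(b_x,b_{x+1}))))`. -/
noncomputable def Phi (M : ℕ) (β : ℝ) (g0 : Base → Base → ℝ) (b : ℕ → Base)
    (w : ℕ → ℝ) (α : ℕ → Base) : ℝ :=
  ∑ x ∈ Finset.Icc 1 (M - 1),
    w x * (β * g0 (α x) (α (x + 1))
      + Real.exp (-(β * (g0 (α x) (α (x + 1)) - g0 (b x) (b (x + 1))))))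

lemma key_le (β s t : ℝ) (hβ : 0 < β) :
    β * s + Real.exp (-(β * (s - s))) ≤ β * t + Real.exp (-(β * (t - s))) := by
  have h := Real.add_one_le_exp (-(β * (t - s)))
  simp only [sub_self, mul_zero, neg_zero, Real.exp_zero]
  nlinarith [h]

lemma key_lt (β s t : ℝ) (hβ : 0 < β) (hts : t ≠ s) :
    β * s + Real.exp (-(β * (s - s))) < β * t + Real.exp (-(β * (t - s))) := by
  have hne : -(β * (t - s)) ≠ 0 := by
    intro h
    apply hts
    have : β * (t - s) = 0 := by linarith
    have := (mul_eq_zero.mp this).resolve_left (ne_of_gt hβ)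
    linarith
  have h := Real.add_one_lt_exp hne
  simp only [sub_self, mul_zero, neg_zero, Real.exp_zero]
  nlinarith [h]

/-- Under Hypothesis (Hyp1) and with positive weights, among all
`α ∈ B^M` with `α_1 = b_1` the function `Φ` attains its minimum uniquely at `α = b`:
`Φ(b) < Φ(α)` for every `α ≠ b` (on the coordinates `1,…,M`) with `α_1 = b_1`. -/
theorem stmt_16 (M : ℕ) (hM : 2 ≤ M) (β : ℝ) (hβ : 0 < β)
    (g0 : Base → Base → ℝ)
    (hinj : ∀ a : Base, Function.Injective (fun γ => g0 a γ)
      ∧ Function.Injective (fun γ => g0 γ a))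
    (b : ℕ → Base) (w : ℕ → ℝ) (hw : ∀ x, 1 ≤ x → x ≤ M - 1 → 0 < w x) :
    ∀ α : ℕ → Base, α 1 = b 1 → (∃ x, 1 ≤ x ∧ x ≤ M ∧ α x ≠ b x) →
      Phi M β g0 b w b < Phi M β g0 b w α := by
  intro α h1 hex
  classical
  -- minimal differing index
  have hexP : ∃ x, 1 ≤ x ∧ x ≤ M ∧ α x ≠ b x := hex
  set x0 := Nat.find hexP with hx0def
  obtain ⟨hx1, hxM, hxne⟩ := Nat.find_spec hexP
  have hx0ne1 : x0 ≠ 1 := by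
    intro h
    rw [hx0def] at h; rw [h] at hxne; exact hxne h1
  have hx02 : 2 ≤ x0 := by omega
  set y := x0 - 1 with hy
  have hy1 : 1 ≤ y := by omega
  have hyM : y ≤ M - 1 := by omega
  have hysucc : y + 1 = x0 := by omega
  have hαy : α y = b y := by
    by_contra hne
    have := Nat.find_min hexP (show y < x0 by omega)
    exact this ⟨hy1, by omega, hne⟩
  have hgne : g0 (α y) (α (y + 1)) ≠ g0 (b y) (b (y + 1)) := by
    rw [hαy, hysucc]
    intro h
    exact hxne ((hinj (b y)).1 h)
  unfold Phi
  apply Finset.sum_lt_sum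
  · intro i hi
    simp only [Finset.mem_Icc] at hi
    have hwi := hw i hi.1 hi.2
    exact mul_le_mul_of_nonneg_left
      (key_le β (g0 (b i) (b (i+1))) (g0 (α i) (α (i+1))) hβ) hwi.le
  · refine ⟨y, Finset.mem_Icc.mpr ⟨hy1, hyM⟩, ?_⟩
    have hwy := hw y hy1 hyM
    exact mul_lt_mul_of_pos_left
      (key_lt β (g0 (b y) (b (y+1))) (g0 (α y) (α (y+1))) hβ hgne) hwy
end
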